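/- Let F(x₁,x₂,x₃) = (2x₁² + 2x₁x₂ + x₁x₃, −x₁x₂ + x₂² + 3x₂x₃, 3x₂x₃ − x₃²) be the vector field of the three-dimensional Lotka–Volterra system on ℂ³. If V = (V¹, V², V³) is an analytic vector field in a neighbourhood of the origin of ℂ³ satisfying (L_F V)^i = Σ_s F^s ∂V^i/∂x^s − Σ_l V^l ∂F^i/∂x^l = 0 for i = 1, 2, 3 (i.e., V is an analytic tensor invariant of type (1,0)), then there exists a constant c ∈ ℂ such that V = c·F. -/

import Mathlib

open scoped BigOperators

/-- Partial derivative of `f : ℂⁿ → ℂ` in the `s`-th coordinate direction at `x`. -/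
noncomputable def pderivC {n : ℕ} (f : (Fin n → ℂ) → ℂ) (s : Fin n) (x : Fin n → ℂ) : ℂ :=
  fderiv ℂ f x (Pi.single s 1)

/-- Components of the Lie derivative `L_F T` of a type-`(p,q)` tensor field `T` on `ℂⁿ`
along the vector field `F`. -/
noncomputable def lieDeriv {n p q : ℕ} (F : Fin n → (Fin n → ℂ) → ℂ)
    (T : (Fin p → Fin n) → (Fin q → Fin n) → (Fin n → ℂ) → ℂ)
    (i : Fin p → Fin n) (j : Fin q → Fin n) (x : Fin n → ℂ) : ℂ :=
  (∑ s, F s x * pderivC (T i j) s x)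
    + ∑ a : Fin q, ∑ k, T i (Function.update j a k) x * pderivC (F k) (j a) x
    - ∑ b : Fin p, ∑ l, T (Function.update i b l) j x * pderivC (F (i b)) l x
/-- The vector field of the three-dimensional Lotka–Volterra system
`ẋ₁ = 2x₁² + 2x₁x₂ + x₁x₃, ẋ₂ = −x₁x₂ + x₂² + 3x₂x₃, ẋ₃ = 3x₂x₃ − x₃²` on `ℂ³`. -/
noncomputable def FLV : Fin 3 → (Fin 3 → ℂ) → ℂ :=
  ![fun x => 2 * (x 0) ^ 2 + 2 * x 0 * x 1 + x 0 * x 2,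
    fun x => -(x 0 * x 1) + (x 1) ^ 2 + 3 * x 1 * x 2,
    fun x => 3 * x 1 * x 2 - (x 2) ^ 2]

set_option linter.unusedVariables false

abbrev E3 := Fin 3 → ℂ

noncomputable def DD (s : Fin 3) (f : E3 → ℂ) : E3 → ℂ := fun x => fderiv ℂ f x (Pi.single s 1)

lemma pderivC_eq_DD (f : E3 → ℂ) (s : Fin 3) : pderivC f s = DD s f := rfl

noncomputable def Dk (a b c : ℕ) (f : E3 → ℂ) : E3 → ℂ :=
  (DD 0)^[a] ((DD 1)^[b] ((DD 2)^[c] f))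

section Toolkit

variable {U : Set E3} (hU : IsOpen U)

lemma an_DD {f : E3 → ℂ} (hf : AnalyticOnNhd ℂ f U) (s : Fin 3) :
    AnalyticOnNhd ℂ (DD s f) U := by
  intro x hx
  exact ((ContinuousLinearMap.apply ℂ ℂ (Pi.single s 1 : E3)).analyticAt _).comp ((hf x hx).fderiv)

lemma an_coord (s : Fin 3) : AnalyticOnNhd ℂ (fun x : E3 => x s) U := by
  intro x hx
  exact (ContinuousLinearMap.proj s : E3 →L[ℂ] ℂ).analyticAt x

lemma an_coord_mul {f : E3 → ℂ} (hf : AnalyticOnNhd ℂ f U) (s : Fin 3) :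
    AnalyticOnNhd ℂ (fun x => x s * f x) U :=
  (an_coord s).mul hf

lemma an_add {f g : E3 → ℂ} (hf : AnalyticOnNhd ℂ f U) (hg : AnalyticOnNhd ℂ g U) :
    AnalyticOnNhd ℂ (fun x => f x + g x) U := hf.add hg

lemma an_const_mul {f : E3 → ℂ} (hf : AnalyticOnNhd ℂ f U) (k : ℂ) :
    AnalyticOnNhd ℂ (fun x => k * f x) U := analyticOnNhd_const.mul hf

include hU in
lemma DD_congr {f g : E3 → ℂ} (hfg : Set.EqOn f g U) (s : Fin 3) :
    Set.EqOn (DD s f) (DD s g) U := by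
  intro x hx
  show fderiv ℂ f x (Pi.single s 1) = fderiv ℂ g x (Pi.single s 1)
  rw [(hfg.eventuallyEq_of_mem (hU.mem_nhds hx)).fderiv_eq]

lemma DD_add {f g : E3 → ℂ} {x : E3} (hf : DifferentiableAt ℂ f x)
    (hg : DifferentiableAt ℂ g x) (s : Fin 3) :
    DD s (fun y => f y + g y) x = DD s f x + DD s g x := by
  show fderiv ℂ (fun y => f y + g y) x _ = _
  rw [fderiv_fun_add hf hg]; rfl

lemma DD_const_mul {f : E3 → ℂ} {x : E3} (hf : DifferentiableAt ℂ f x) (k : ℂ) (s : Fin 3) :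
    DD s (fun y => k * f y) x = k * DD s f x := by
  show fderiv ℂ (fun y => k * f y) x _ = _
  rw [fderiv_const_mul hf k]; rfl

lemma DD_const (k : ℂ) (s : Fin 3) (x : E3) : DD s (fun _ => k) x = 0 := by
  show fderiv ℂ (fun _ => k) x _ = 0
  rw [fderiv_fun_const]; rfl

lemma DD_coord (s j : Fin 3) (x : E3) :
    DD s (fun y => y j) x = if j = s then 1 else 0 := by
  show fderiv ℂ (fun y => y j) x (Pi.single s 1) = _
  have : (fun y : E3 => y j) = (ContinuousLinearMap.proj j : E3 →L[ℂ] ℂ) := rfl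
  rw [this, ContinuousLinearMap.fderiv]
  simp [Pi.single_apply]

lemma DD_coord_mul {f : E3 → ℂ} {x : E3} (hf : DifferentiableAt ℂ f x) (s t : Fin 3) :
    DD t (fun y => y s * f y) x = x s * DD t f x + (if s = t then 1 else 0) * f x := by
  have hc : DifferentiableAt ℂ (⇑(ContinuousLinearMap.proj s : E3 →L[ℂ] ℂ)) x :=
    (ContinuousLinearMap.proj s : E3 →L[ℂ] ℂ).differentiableAt
  show fderiv ℂ (fun y => (ContinuousLinearMap.proj s : E3 →L[ℂ] ℂ) y * f y) x (Pi.single t 1) = _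
  rw [fderiv_fun_mul hc hf, ContinuousLinearMap.fderiv]
  have h2 : (ContinuousLinearMap.proj s : E3 →L[ℂ] ℂ) (Pi.single t 1) = if s = t then 1 else 0 := by
    simp [Pi.single_apply]
  simp only [ContinuousLinearMap.add_apply, ContinuousLinearMap.smul_apply, smul_eq_mul, h2]
  have h3 : (ContinuousLinearMap.proj s : E3 →L[ℂ] ℂ) x = x s := rfl
  rw [h3]
  show x s * fderiv ℂ f x (Pi.single t 1) + f x * (if s = t then 1 else 0) = _
  ring_nf
  rfl

-- iterate layer
lemma an_iter {f : E3 → ℂ} (hf : AnalyticOnNhd ℂ f U) (t : Fin 3) (n : ℕ) :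
    AnalyticOnNhd ℂ ((DD t)^[n] f) U := by
  induction n with
  | zero => exact hf
  | succ n ih => rw [Function.iterate_succ_apply']; exact an_DD ih t

include hU in
lemma iter_congr {f g : E3 → ℂ} (hfg : Set.EqOn f g U) (t : Fin 3) (n : ℕ) :
    Set.EqOn ((DD t)^[n] f) ((DD t)^[n] g) U := by
  induction n with
  | zero => exact hfg
  | succ n ih =>
    rw [Function.iterate_succ_apply', Function.iterate_succ_apply']
    exact DD_congr hU ih t

include hU in
lemma iter_add {f g : E3 → ℂ} (hf : AnalyticOnNhd ℂ f U) (hg : AnalyticOnNhd ℂ g U)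
    (t : Fin 3) (n : ℕ) :
    Set.EqOn ((DD t)^[n] (fun x => f x + g x)) (fun x => (DD t)^[n] f x + (DD t)^[n] g x) U := by
  induction n with
  | zero => intro x _; rfl
  | succ n ih =>
    intro x hx
    rw [Function.iterate_succ_apply']
    have e1 : (DD t) ((DD t)^[n] fun x => f x + g x) x
        = DD t (fun x => (DD t)^[n] f x + (DD t)^[n] g x) x := DD_congr hU ih t hx
    rw [e1, DD_add ((an_iter hf t n x hx).differentiableAt)
      ((an_iter hg t n x hx).differentiableAt) t]
    rw [Function.iterate_succ_apply', Function.iterate_succ_apply']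

include hU in
lemma iter_const_mul {f : E3 → ℂ} (hf : AnalyticOnNhd ℂ f U) (k : ℂ) (t : Fin 3) (n : ℕ) :
    Set.EqOn ((DD t)^[n] (fun x => k * f x)) (fun x => k * (DD t)^[n] f x) U := by
  induction n with
  | zero => intro x _; rfl
  | succ n ih =>
    intro x hx
    rw [Function.iterate_succ_apply']
    have e1 : (DD t) ((DD t)^[n] fun x => k * f x) x
        = DD t (fun x => k * (DD t)^[n] f x) x := DD_congr hU ih t hx
    rw [e1, DD_const_mul ((an_iter hf t n x hx).differentiableAt) k t,
      Function.iterate_succ_apply']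

include hU in
lemma iter_coord_mul_ne {f : E3 → ℂ} (hf : AnalyticOnNhd ℂ f U) {s t : Fin 3} (hst : s ≠ t)
    (n : ℕ) :
    Set.EqOn ((DD t)^[n] (fun x => x s * f x)) (fun x => x s * (DD t)^[n] f x) U := by
  induction n with
  | zero => intro x _; rfl
  | succ n ih =>
    intro x hx
    rw [Function.iterate_succ_apply']
    have e1 : (DD t) ((DD t)^[n] fun x => x s * f x) x
        = DD t (fun x => x s * (DD t)^[n] f x) x := DD_congr hU ih t hx
    rw [e1, DD_coord_mul ((an_iter hf t n x hx).differentiableAt) s t]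
    simp [hst, Function.iterate_succ_apply']

include hU in
lemma iter_coord_mul_self {f : E3 → ℂ} (hf : AnalyticOnNhd ℂ f U) (t : Fin 3) (n : ℕ) :
    Set.EqOn ((DD t)^[n] (fun x => x t * f x))
      (fun x => x t * (DD t)^[n] f x + (n : ℂ) * (DD t)^[n - 1] f x) U := by
  induction n with
  | zero => intro x _; simp
  | succ n ih =>
    intro x hx
    rw [Function.iterate_succ_apply']
    have e1 : (DD t) ((DD t)^[n] fun x => x t * f x) x
        = DD t (fun x => x t * (DD t)^[n] f x + (n : ℂ) * (DD t)^[n - 1] f x) x :=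
      DD_congr hU ih t hx
    rw [e1]
    have han : AnalyticOnNhd ℂ ((DD t)^[n] f) U := an_iter hf t n
    have hbn : AnalyticOnNhd ℂ ((DD t)^[n-1] f) U := an_iter hf t (n-1)
    rw [DD_add ((an_coord_mul han t x hx).differentiableAt)
        ((an_const_mul hbn ((n:ℂ)) x hx).differentiableAt) t,
      DD_coord_mul ((han x hx).differentiableAt) t t,
      DD_const_mul ((hbn x hx).differentiableAt) ((n:ℂ)) t]
    simp only [if_pos rfl, one_mul]
    have h2 : DD t ((DD t)^[n] f) x = (DD t)^[n+1] f x := by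
      rw [Function.iterate_succ_apply']
    rw [h2]
    cases n with
    | zero => simp
    | succ m =>
      have h3 : DD t ((DD t)^[m+1-1] f) x = (DD t)^[m+1] f x := by
        simp only [Nat.add_sub_cancel]
        rw [Function.iterate_succ_apply']
      rw [h3]
      push_cast
      ring

omit hU in
lemma swapDD {f : E3 → ℂ} (hf : AnalyticOnNhd ℂ f U) (s t : Fin 3) :
    Set.EqOn (DD s (DD t f)) (DD t (DD s f)) U := by
  intro x hx
  have hd : DifferentiableAt ℂ (fderiv ℂ f) x := ((hf x hx).fderiv).differentiableAt
  have hsym := ((hf x hx).contDiffAt.isSymmSndFDerivAt le_top)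
  show fderiv ℂ (fun y => fderiv ℂ f y (Pi.single t 1)) x (Pi.single s 1)
      = fderiv ℂ (fun y => fderiv ℂ f y (Pi.single s 1)) x (Pi.single t 1)
  rw [fderiv_clm_apply hd (differentiableAt_const _),
      fderiv_clm_apply hd (differentiableAt_const _)]
  simp only [ContinuousLinearMap.add_apply, ContinuousLinearMap.comp_apply,
    ContinuousLinearMap.flip_apply, fderiv_fun_const, Pi.zero_apply,
    ContinuousLinearMap.comp_zero, ContinuousLinearMap.zero_apply, zero_add]
  exact hsym _ _

include hU in
lemma iter_comm {f : E3 → ℂ} (hf : AnalyticOnNhd ℂ f U) (s t : Fin 3) (n : ℕ) :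
    Set.EqOn ((DD t)^[n] (DD s f)) (DD s ((DD t)^[n] f)) U := by
  induction n with
  | zero => intro x _; rfl
  | succ n ih =>
    intro x hx
    rw [Function.iterate_succ_apply', Function.iterate_succ_apply']
    have e1 : DD t ((DD t)^[n] (DD s f)) x = DD t (DD s ((DD t)^[n] f)) x :=
      DD_congr hU ih t hx
    rw [e1]
    exact (swapDD (an_iter hf t n) s t hx).symm

end Toolkit

section Toolkit2

variable {U : Set E3} (hU : IsOpen U)

lemma an_Dk {f : E3 → ℂ} (hf : AnalyticOnNhd ℂ f U) (a b c : ℕ) :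
    AnalyticOnNhd ℂ (Dk a b c f) U :=
  an_iter (an_iter (an_iter hf 2 c) 1 b) 0 a

include hU in
lemma Dk_congr {f g : E3 → ℂ} (hfg : Set.EqOn f g U) (a b c : ℕ) :
    Set.EqOn (Dk a b c f) (Dk a b c g) U :=
  iter_congr hU (iter_congr hU (iter_congr hU hfg 2 c) 1 b) 0 a

lemma Dk_zero (a b c : ℕ) : ∀ x, Dk a b c (fun _ => (0:ℂ)) x = 0 := by
  have key : ∀ (t : Fin 3) (n : ℕ), (DD t)^[n] (fun _ => (0:ℂ)) = fun _ => (0:ℂ) := by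
    intro t n
    induction n with
    | zero => rfl
    | succ n ih =>
      rw [Function.iterate_succ_apply', ih]
      funext x
      exact DD_const 0 t x
  intro x
  show (DD 0)^[_] ((DD 1)^[_] ((DD 2)^[_] _)) x = 0
  rw [key 2, key 1, key 0]

include hU in
lemma Dk_add {f g : E3 → ℂ} (hf : AnalyticOnNhd ℂ f U) (hg : AnalyticOnNhd ℂ g U)
    (a b c : ℕ) :
    Set.EqOn (Dk a b c (fun x => f x + g x)) (fun x => Dk a b c f x + Dk a b c g x) U := by
  intro x hx
  have h2 := iter_add hU hf hg 2 c
  have h1 : Set.EqOn ((DD 1)^[b] ((DD 2)^[c] fun x => f x + g x))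
      (fun x => (DD 1)^[b] ((DD 2)^[c] f) x + (DD 1)^[b] ((DD 2)^[c] g) x) U := by
    intro y hy
    have := iter_congr hU h2 1 b hy
    rw [this]
    exact iter_add hU (an_iter hf 2 c) (an_iter hg 2 c) 1 b hy
  have h0 : Set.EqOn ((DD 0)^[a] ((DD 1)^[b] ((DD 2)^[c] fun x => f x + g x)))
      (fun x => Dk a b c f x + Dk a b c g x) U := by
    intro y hy
    have := iter_congr hU h1 0 a hy
    rw [this]
    exact iter_add hU (an_iter (an_iter hf 2 c) 1 b) (an_iter (an_iter hg 2 c) 1 b) 0 a hy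
  exact h0 hx

include hU in
lemma Dk_const_mul {f : E3 → ℂ} (hf : AnalyticOnNhd ℂ f U) (k : ℂ) (a b c : ℕ) :
    Set.EqOn (Dk a b c (fun x => k * f x)) (fun x => k * Dk a b c f x) U := by
  intro x hx
  have h2 := iter_const_mul hU hf k 2 c
  have h1 : Set.EqOn ((DD 1)^[b] ((DD 2)^[c] fun x => k * f x))
      (fun x => k * (DD 1)^[b] ((DD 2)^[c] f) x) U := by
    intro y hy
    rw [iter_congr hU h2 1 b hy]
    exact iter_const_mul hU (an_iter hf 2 c) k 1 b hy
  have h0 : Set.EqOn ((DD 0)^[a] ((DD 1)^[b] ((DD 2)^[c] fun x => k * f x)))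
      (fun x => k * Dk a b c f x) U := by
    intro y hy
    rw [iter_congr hU h1 0 a hy]
    exact iter_const_mul hU (an_iter (an_iter hf 2 c) 1 b) k 0 a hy
  exact h0 hx

-- push lemmas : Dk a b c (DD t f) vs incremented index
lemma Dk_push2 (f : E3 → ℂ) (a b c : ℕ) : Dk a b c (DD 2 f) = Dk a b (c+1) f := by
  show (DD 0)^[a] ((DD 1)^[b] ((DD 2)^[c] (DD 2 f))) = _
  rw [← Function.iterate_succ_apply]
  rfl

include hU in
lemma Dk_push1 {f : E3 → ℂ} (hf : AnalyticOnNhd ℂ f U) (a b c : ℕ) :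
    Set.EqOn (Dk a b c (DD 1 f)) (Dk a (b+1) c f) U := by
  have h2 : Set.EqOn ((DD 2)^[c] (DD 1 f)) (DD 1 ((DD 2)^[c] f)) U := iter_comm hU hf 1 2 c
  intro x hx
  show (DD 0)^[a] ((DD 1)^[b] ((DD 2)^[c] (DD 1 f))) x = (DD 0)^[a] ((DD 1)^[b+1] ((DD 2)^[c] f)) x
  have h1 : Set.EqOn ((DD 1)^[b] ((DD 2)^[c] (DD 1 f))) ((DD 1)^[b+1] ((DD 2)^[c] f)) U := by
    intro y hy
    rw [iter_congr hU h2 1 b hy, ← Function.iterate_succ_apply]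
  exact iter_congr hU h1 0 a hx

include hU in
lemma Dk_push0 {f : E3 → ℂ} (hf : AnalyticOnNhd ℂ f U) (a b c : ℕ) :
    Set.EqOn (Dk a b c (DD 0 f)) (Dk (a+1) b c f) U := by
  have h2 : Set.EqOn ((DD 2)^[c] (DD 0 f)) (DD 0 ((DD 2)^[c] f)) U := iter_comm hU hf 0 2 c
  have h1 : Set.EqOn ((DD 1)^[b] ((DD 2)^[c] (DD 0 f))) ((DD 0) ((DD 1)^[b] ((DD 2)^[c] f))) U := by
    intro y hy
    rw [iter_congr hU h2 1 b hy]
    exact iter_comm hU (an_iter hf 2 c) 0 1 b hy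
  intro x hx
  show (DD 0)^[a] ((DD 1)^[b] ((DD 2)^[c] (DD 0 f))) x = (DD 0)^[a+1] ((DD 1)^[b] ((DD 2)^[c] f)) x
  rw [iter_congr hU h1 0 a hx, ← Function.iterate_succ_apply]

end Toolkit2

section Toolkit3

variable {U : Set E3} (hU : IsOpen U) (h0 : (0:E3) ∈ U)

include hU h0 in
lemma rem0 {f : E3 → ℂ} (hf : AnalyticOnNhd ℂ f U) (a b c : ℕ) :
    Dk a b c (fun x => x 0 * f x) 0 = (a:ℂ) * Dk (a-1) b c f 0 := by
  have h2 : Set.EqOn ((DD 2)^[c] (fun x => x 0 * f x)) (fun x => x 0 * (DD 2)^[c] f x) U :=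
    iter_coord_mul_ne hU hf (by decide) c
  have h1 : Set.EqOn ((DD 1)^[b] ((DD 2)^[c] (fun x => x 0 * f x)))
      (fun x => x 0 * (DD 1)^[b] ((DD 2)^[c] f) x) U := by
    intro y hy
    rw [iter_congr hU h2 1 b hy]
    exact iter_coord_mul_ne hU (an_iter hf 2 c) (by decide) b hy
  have hh : Set.EqOn (Dk a b c (fun x => x 0 * f x))
      (fun x => x 0 * Dk a b c f x + (a:ℂ) * (DD 0)^[a-1] ((DD 1)^[b] ((DD 2)^[c] f)) x) U := by
    intro y hy
    show (DD 0)^[a] ((DD 1)^[b] ((DD 2)^[c] (fun x => x 0 * f x))) y = _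
    rw [iter_congr hU h1 0 a hy]
    exact iter_coord_mul_self hU (an_iter (an_iter hf 2 c) 1 b) 0 a hy
  have := hh h0
  rw [this]
  show (0:ℂ) * _ + _ = _
  rw [zero_mul, zero_add]
  rfl

include hU h0 in
lemma rem1 {f : E3 → ℂ} (hf : AnalyticOnNhd ℂ f U) (a b c : ℕ) :
    Dk a b c (fun x => x 1 * f x) 0 = (b:ℂ) * Dk a (b-1) c f 0 := by
  have h2 : Set.EqOn ((DD 2)^[c] (fun x => x 1 * f x)) (fun x => x 1 * (DD 2)^[c] f x) U :=
    iter_coord_mul_ne hU hf (by decide) c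
  have h1 : Set.EqOn ((DD 1)^[b] ((DD 2)^[c] (fun x => x 1 * f x)))
      (fun x => x 1 * (DD 1)^[b] ((DD 2)^[c] f) x + (b:ℂ) * (DD 1)^[b-1] ((DD 2)^[c] f) x) U := by
    intro y hy
    rw [iter_congr hU h2 1 b hy]
    exact iter_coord_mul_self hU (an_iter hf 2 c) 1 b hy
  have hh : Set.EqOn (Dk a b c (fun x => x 1 * f x))
      (fun x => x 1 * (DD 0)^[a] ((DD 1)^[b] ((DD 2)^[c] f)) x
        + (b:ℂ) * (DD 0)^[a] ((DD 1)^[b-1] ((DD 2)^[c] f)) x) U := by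
    intro y hy
    show (DD 0)^[a] ((DD 1)^[b] ((DD 2)^[c] (fun x => x 1 * f x))) y = _
    rw [iter_congr hU h1 0 a hy]
    have hg1 : AnalyticOnNhd ℂ (fun x => x 1 * (DD 1)^[b] ((DD 2)^[c] f) x) U :=
      an_coord_mul (an_iter (an_iter hf 2 c) 1 b) 1
    have hg2 : AnalyticOnNhd ℂ (fun x => (b:ℂ) * (DD 1)^[b-1] ((DD 2)^[c] f) x) U :=
      an_const_mul (an_iter (an_iter hf 2 c) 1 (b-1)) _
    have e1 := iter_coord_mul_ne hU (an_iter (an_iter hf 2 c) 1 b)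
      (show (1:Fin 3) ≠ (0:Fin 3) by decide) a hy
    have e2 := iter_const_mul hU (an_iter (an_iter hf 2 c) 1 (b-1)) ((b:ℂ)) 0 a hy
    rw [iter_add hU hg1 hg2 0 a hy]
    beta_reduce
    rw [e1, e2]
  have := hh h0
  rw [this]
  show (0:ℂ) * _ + _ = _
  rw [zero_mul, zero_add]
  rfl

include hU h0 in
lemma rem2 {f : E3 → ℂ} (hf : AnalyticOnNhd ℂ f U) (a b c : ℕ) :
    Dk a b c (fun x => x 2 * f x) 0 = (c:ℂ) * Dk a b (c-1) f 0 := by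
  have h2 : Set.EqOn ((DD 2)^[c] (fun x => x 2 * f x))
      (fun x => x 2 * (DD 2)^[c] f x + (c:ℂ) * (DD 2)^[c-1] f x) U :=
    iter_coord_mul_self hU hf 2 c
  have h1 : Set.EqOn ((DD 1)^[b] ((DD 2)^[c] (fun x => x 2 * f x)))
      (fun x => x 2 * (DD 1)^[b] ((DD 2)^[c] f) x + (c:ℂ) * (DD 1)^[b] ((DD 2)^[c-1] f) x) U := by
    intro y hy
    rw [iter_congr hU h2 1 b hy]
    have hg1 : AnalyticOnNhd ℂ (fun x => x 2 * (DD 2)^[c] f x) U :=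
      an_coord_mul (an_iter hf 2 c) 2
    have hg2 : AnalyticOnNhd ℂ (fun x => (c:ℂ) * (DD 2)^[c-1] f x) U :=
      an_const_mul (an_iter hf 2 (c-1)) _
    have e1 := iter_coord_mul_ne hU (an_iter hf 2 c)
      (show (2:Fin 3) ≠ (1:Fin 3) by decide) b hy
    have e2 := iter_const_mul hU (an_iter hf 2 (c-1)) ((c:ℂ)) 1 b hy
    rw [iter_add hU hg1 hg2 1 b hy]
    beta_reduce
    rw [e1, e2]
  have hh : Set.EqOn (Dk a b c (fun x => x 2 * f x))
      (fun x => x 2 * (DD 0)^[a] ((DD 1)^[b] ((DD 2)^[c] f)) x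
        + (c:ℂ) * (DD 0)^[a] ((DD 1)^[b] ((DD 2)^[c-1] f)) x) U := by
    intro y hy
    show (DD 0)^[a] ((DD 1)^[b] ((DD 2)^[c] (fun x => x 2 * f x))) y = _
    rw [iter_congr hU h1 0 a hy]
    have hg1 : AnalyticOnNhd ℂ (fun x => x 2 * (DD 1)^[b] ((DD 2)^[c] f) x) U :=
      an_coord_mul (an_iter (an_iter hf 2 c) 1 b) 2
    have hg2 : AnalyticOnNhd ℂ (fun x => (c:ℂ) * (DD 1)^[b] ((DD 2)^[c-1] f) x) U :=
      an_const_mul (an_iter (an_iter hf 2 (c-1)) 1 b) _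
    have e1 := iter_coord_mul_ne hU (an_iter (an_iter hf 2 c) 1 b)
      (show (2:Fin 3) ≠ (0:Fin 3) by decide) a hy
    have e2 := iter_const_mul hU (an_iter (an_iter hf 2 (c-1)) 1 b) ((c:ℂ)) 0 a hy
    rw [iter_add hU hg1 hg2 0 a hy]
    beta_reduce
    rw [e1, e2]
  have := hh h0
  rw [this]
  show (0:ℂ) * _ + _ = _
  rw [zero_mul, zero_add]
  rfl

end Toolkit3

section PartB

variable {U : Set E3} (hU : IsOpen U) (h0 : (0:E3) ∈ U)

noncomputable def Dy (y : E3) (f : E3 → ℂ) : E3 → ℂ := fun x => fderiv ℂ f x y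

lemma single_decomp (y : E3) :
    y = y 0 • (Pi.single 0 1 : E3) + y 1 • (Pi.single 1 1 : E3) + y 2 • (Pi.single 2 1 : E3) := by
  funext j
  fin_cases j <;> simp [Pi.single_apply]

lemma Dy_eq (y : E3) (f : E3 → ℂ) (x : E3) :
    Dy y f x = y 0 * DD 0 f x + y 1 * DD 1 f x + y 2 * DD 2 f x := by
  show fderiv ℂ f x y = _
  conv_lhs => rw [single_decomp y]
  rw [map_add, map_add, map_smul, map_smul, map_smul]
  rfl

lemma Dy_eq_fun (y : E3) (f : E3 → ℂ) :
    Dy y f = fun x => y 0 * DD 0 f x + (y 1 * DD 1 f x + y 2 * DD 2 f x) := by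
  funext x
  rw [Dy_eq]; ring

lemma an_Dy {f : E3 → ℂ} (hf : AnalyticOnNhd ℂ f U) (y : E3) :
    AnalyticOnNhd ℂ (Dy y f) U := by
  rw [Dy_eq_fun]
  exact an_add (an_const_mul (an_DD hf 0) _)
    (an_add (an_const_mul (an_DD hf 1) _) (an_const_mul (an_DD hf 2) _))

include hU h0 in
lemma P_DD {f : E3 → ℂ} (hf : AnalyticOnNhd ℂ f U)
    (hP : ∀ a b c, Dk a b c f 0 = 0) (t : Fin 3) :
    ∀ a b c, Dk a b c (DD t f) 0 = 0 := by
  intro a b c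
  fin_cases t
  · show Dk a b c (DD 0 f) 0 = 0
    rw [Dk_push0 hU hf a b c h0]; exact hP (a+1) b c
  · show Dk a b c (DD 1 f) 0 = 0
    rw [Dk_push1 hU hf a b c h0]; exact hP a (b+1) c
  · show Dk a b c (DD 2 f) 0 = 0
    rw [Dk_push2 f a b c]; exact hP a b (c+1)

include hU h0 in
lemma P_Dy {f : E3 → ℂ} (hf : AnalyticOnNhd ℂ f U)
    (hP : ∀ a b c, Dk a b c f 0 = 0) (y : E3) :
    ∀ a b c, Dk a b c (Dy y f) 0 = 0 := by
  intro a b c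
  rw [Dy_eq_fun]
  have a0 := an_const_mul (an_DD hf 0) (y 0)
  have a1 := an_const_mul (an_DD hf 1) (y 1)
  have a2 := an_const_mul (an_DD hf 2) (y 2)
  rw [Dk_add hU a0 (an_add a1 a2) a b c h0]
  beta_reduce
  rw [Dk_add hU a1 a2 a b c h0]
  beta_reduce
  rw [Dk_const_mul hU (an_DD hf 0) (y 0) a b c h0,
      Dk_const_mul hU (an_DD hf 1) (y 1) a b c h0,
      Dk_const_mul hU (an_DD hf 2) (y 2) a b c h0]
  beta_reduce
  rw [P_DD hU h0 hf hP 0 a b c, P_DD hU h0 hf hP 1 a b c, P_DD hU h0 hf hP 2 a b c]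
  ring

include hU h0 in
lemma P_iter_Dy {f : E3 → ℂ} (hf : AnalyticOnNhd ℂ f U)
    (hP : ∀ a b c, Dk a b c f 0 = 0) (y : E3) (n : ℕ) :
    AnalyticOnNhd ℂ ((Dy y)^[n] f) U ∧ (∀ a b c, Dk a b c ((Dy y)^[n] f) 0 = 0) := by
  induction n with
  | zero => exact ⟨hf, hP⟩
  | succ n ih =>
    rw [Function.iterate_succ_apply']
    exact ⟨an_Dy ih.1 y, P_Dy hU h0 ih.1 ih.2 y⟩

include hU in
lemma Dy_congr {f g : E3 → ℂ} (hfg : Set.EqOn f g U) (y : E3) :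
    Set.EqOn (Dy y f) (Dy y g) U := by
  intro x hx
  show fderiv ℂ f x y = fderiv ℂ g x y
  rw [(hfg.eventuallyEq_of_mem (hU.mem_nhds hx)).fderiv_eq]

include hU in
lemma diag_eq {f : E3 → ℂ} (hf : AnalyticOnNhd ℂ f U) (y : E3) (n : ℕ) :
    Set.EqOn (fun x => iteratedFDeriv ℂ n f x (fun _ => y)) ((Dy y)^[n] f) U := by
  induction n with
  | zero => intro x _; simp [iteratedFDeriv_zero_apply]
  | succ n ih =>
    intro x hx
    have hdiff : DifferentiableAt ℂ (iteratedFDeriv ℂ n f) x :=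
      ((hf.iteratedFDeriv n) x hx).differentiableAt
    have step1 : iteratedFDeriv ℂ (n+1) f x (fun _ => y)
        = fderiv ℂ (fun z => iteratedFDeriv ℂ n f z (fun _ : Fin n => y)) x y := by
      rw [iteratedFDeriv_succ_apply_left]
      rw [fderiv_continuousMultilinear_apply_const hdiff]
      rfl
    rw [Function.iterate_succ_apply']
    calc iteratedFDeriv ℂ (n+1) f x (fun _ => y)
        = Dy y (fun z => iteratedFDeriv ℂ n f z (fun _ : Fin n => y)) x := step1
      _ = Dy y ((Dy y)^[n] f) x := Dy_congr hU ih y hx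

include hU h0 in
lemma vanish_near {f : E3 → ℂ} (hf : AnalyticOnNhd ℂ f U)
    (hP : ∀ a b c, Dk a b c f 0 = 0) : f =ᶠ[nhds (0:E3)] 0 := by
  obtain ⟨p, hp⟩ := hf 0 h0
  obtain ⟨r, hball⟩ := hp
  have hzero : ∀ y ∈ EMetric.ball (0:E3) r, f y = 0 := by
    intro y hy
    have hs := hball.hasSum_iteratedFDeriv hy
    have hterm : ∀ n : ℕ, ((n.factorial : ℂ)⁻¹ • iteratedFDeriv ℂ n f 0 fun _ => y) = 0 := by
      intro n
      have h1 : iteratedFDeriv ℂ n f 0 (fun _ => y) = ((Dy y)^[n] f) 0 :=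
        diag_eq hU hf y n h0
      have h2 : ((Dy y)^[n] f) 0 = Dk 0 0 0 ((Dy y)^[n] f) 0 := rfl
      rw [h1, h2, (P_iter_Dy hU h0 hf hP y n).2 0 0 0, smul_zero]
    have : HasSum (fun _ : ℕ => (0:ℂ)) (f (0 + y)) := by
      simpa only [hterm] using hs
    have hfy : f (0 + y) = 0 := this.unique hasSum_zero
    rwa [zero_add] at hfy
  have hmem : EMetric.ball (0:E3) r ∈ nhds (0:E3) :=
    EMetric.ball_mem_nhds 0 hball.r_pos
  exact Filter.eventuallyEq_of_mem hmem (fun y hy => by simpa using hzero y hy)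

end PartB

section PartC1

variable {U : Set E3} (hU : IsOpen U) (h0 : (0:E3) ∈ U)

lemma cast_collapse (n : ℕ) (f : ℕ → ℂ) : (n:ℂ) * f (n-1+1) = (n:ℂ) * f n := by
  cases n <;> simp

lemma cast_pred_mul (n : ℕ) (X : ℂ) : (n:ℂ) * (((n-1:ℕ):ℂ) * X) = (n:ℂ) * (((n:ℂ) - 1) * X) := by
  cases n with
  | zero => simp
  | succ m => push_cast [Nat.add_sub_cancel]; ring

include hU h0 in
lemma Dk_add0 {f g : E3 → ℂ} (hf : AnalyticOnNhd ℂ f U) (hg : AnalyticOnNhd ℂ g U) (a b c : ℕ) :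
    Dk a b c (fun x => f x + g x) 0 = Dk a b c f 0 + Dk a b c g 0 :=
  Dk_add hU hf hg a b c h0

include hU h0 in
lemma Dk_cm0 {f : E3 → ℂ} (hf : AnalyticOnNhd ℂ f U) (k : ℂ) (a b c : ℕ) :
    Dk a b c (fun x => k * f x) 0 = k * Dk a b c f 0 :=
  Dk_const_mul hU hf k a b c h0

include hU h0 in
lemma pu0 {f : E3 → ℂ} (hf : AnalyticOnNhd ℂ f U) (a b c : ℕ) :
    Dk a b c (DD 0 f) 0 = Dk (a+1) b c f 0 := Dk_push0 hU hf a b c h0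

include hU h0 in
lemma pu1 {f : E3 → ℂ} (hf : AnalyticOnNhd ℂ f U) (a b c : ℕ) :
    Dk a b c (DD 1 f) 0 = Dk a (b+1) c f 0 := Dk_push1 hU hf a b c h0

lemma pu2 (f : E3 → ℂ) (a b c : ℕ) :
    Dk a b c (DD 2 f) 0 = Dk a b (c+1) f 0 := by rw [Dk_push2]

include hU h0 in
lemma q00 {g : E3 → ℂ} (hg : AnalyticOnNhd ℂ g U) (a b c : ℕ) :
    Dk a b c (fun x => x 0 * (x 0 * g x)) 0
      = (a:ℂ) * (((a-1:ℕ):ℂ) * Dk (a-1-1) b c g 0) := by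
  rw [rem0 hU h0 (an_coord_mul hg 0) a b c, rem0 hU h0 hg (a-1) b c]

include hU h0 in
lemma q01 {g : E3 → ℂ} (hg : AnalyticOnNhd ℂ g U) (a b c : ℕ) :
    Dk a b c (fun x => x 0 * (x 1 * g x)) 0
      = (a:ℂ) * ((b:ℂ) * Dk (a-1) (b-1) c g 0) := by
  rw [rem0 hU h0 (an_coord_mul hg 1) a b c, rem1 hU h0 hg (a-1) b c]

include hU h0 in
lemma q02 {g : E3 → ℂ} (hg : AnalyticOnNhd ℂ g U) (a b c : ℕ) :
    Dk a b c (fun x => x 0 * (x 2 * g x)) 0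
      = (a:ℂ) * ((c:ℂ) * Dk (a-1) b (c-1) g 0) := by
  rw [rem0 hU h0 (an_coord_mul hg 2) a b c, rem2 hU h0 hg (a-1) b c]

include hU h0 in
lemma q11 {g : E3 → ℂ} (hg : AnalyticOnNhd ℂ g U) (a b c : ℕ) :
    Dk a b c (fun x => x 1 * (x 1 * g x)) 0
      = (b:ℂ) * (((b-1:ℕ):ℂ) * Dk a (b-1-1) c g 0) := by
  rw [rem1 hU h0 (an_coord_mul hg 1) a b c, rem1 hU h0 hg a (b-1) c]

include hU h0 in
lemma q12 {g : E3 → ℂ} (hg : AnalyticOnNhd ℂ g U) (a b c : ℕ) :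
    Dk a b c (fun x => x 1 * (x 2 * g x)) 0
      = (b:ℂ) * ((c:ℂ) * Dk a (b-1) (c-1) g 0) := by
  rw [rem1 hU h0 (an_coord_mul hg 2) a b c, rem2 hU h0 hg a (b-1) c]

include hU h0 in
lemma q22 {g : E3 → ℂ} (hg : AnalyticOnNhd ℂ g U) (a b c : ℕ) :
    Dk a b c (fun x => x 2 * (x 2 * g x)) 0
      = (c:ℂ) * (((c-1:ℕ):ℂ) * Dk a b (c-1-1) g 0) := by
  rw [rem2 hU h0 (an_coord_mul hg 2) a b c, rem2 hU h0 hg a b (c-1)]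

end PartC1

section PartC2

lemma dA_coord (j : Fin 3) (x : E3) : DifferentiableAt ℂ (fun y : E3 => y j) x :=
  (ContinuousLinearMap.proj j : E3 →L[ℂ] ℂ).differentiableAt

lemma DD_cc (s i j : Fin 3) (x : E3) :
    DD s (fun y => y i * y j) x
      = x i * (if j = s then 1 else 0) + (if i = s then 1 else 0) * x j := by
  rw [DD_coord_mul (dA_coord j x) i s, DD_coord s j x]

lemma DD_quad (s : Fin 3) (x : E3) (k1 k2 k3 : ℂ) (i1 j1 i2 j2 i3 j3 : Fin 3) :
    DD s (fun y => k1*(y i1*y j1) + (k2*(y i2*y j2) + k3*(y i3*y j3))) x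
      = k1*(x i1 * (if j1 = s then 1 else 0) + (if i1 = s then 1 else 0) * x j1)
        + (k2*(x i2 * (if j2 = s then 1 else 0) + (if i2 = s then 1 else 0) * x j2)
        + k3*(x i3 * (if j3 = s then 1 else 0) + (if i3 = s then 1 else 0) * x j3)) := by
  have d1 : DifferentiableAt ℂ (fun y : E3 => k1*(y i1*y j1)) x :=
    ((dA_coord i1 x).mul (dA_coord j1 x)).const_mul k1
  have d2 : DifferentiableAt ℂ (fun y : E3 => k2*(y i2*y j2)) x :=
    ((dA_coord i2 x).mul (dA_coord j2 x)).const_mul k2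
  have d3 : DifferentiableAt ℂ (fun y : E3 => k3*(y i3*y j3)) x :=
    ((dA_coord i3 x).mul (dA_coord j3 x)).const_mul k3
  rw [DD_add d1 (show DifferentiableAt ℂ (fun y : E3 => k2*(y i2*y j2) + k3*(y i3*y j3)) x from d2.add d3) s, DD_add d2 d3 s,
    DD_const_mul (show DifferentiableAt ℂ (fun y : E3 => y i1 * y j1) x from (dA_coord i1 x).mul (dA_coord j1 x)) k1 s,
    DD_const_mul (show DifferentiableAt ℂ (fun y : E3 => y i2 * y j2) x from (dA_coord i2 x).mul (dA_coord j2 x)) k2 s,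
    DD_const_mul (show DifferentiableAt ℂ (fun y : E3 => y i3 * y j3) x from (dA_coord i3 x).mul (dA_coord j3 x)) k3 s,
    DD_cc s i1 j1 x, DD_cc s i2 j2 x, DD_cc s i3 j3 x]


lemma fin10 : ((1:Fin 3) = 0) = False := by decide
lemma fin20 : ((2:Fin 3) = 0) = False := by decide
lemma fin01 : ((0:Fin 3) = 1) = False := by decide
lemma fin21 : ((2:Fin 3) = 1) = False := by decide
lemma fin02 : ((0:Fin 3) = 2) = False := by decide
lemma fin12 : ((1:Fin 3) = 2) = False := by decide
lemma fin00 : ((0:Fin 3) = 0) = True := by decide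
lemma fin11 : ((1:Fin 3) = 1) = True := by decide
lemma fin22 : ((2:Fin 3) = 2) = True := by decide

lemma FLV0_shape : FLV 0 = fun y : E3 => (2:ℂ)*(y 0*y 0) + ((2:ℂ)*(y 0*y 1) + (1:ℂ)*(y 0*y 2)) := by
  funext y; simp [FLV]; ring

lemma FLV1_shape : FLV 1 = fun y : E3 => (-1:ℂ)*(y 0*y 1) + ((1:ℂ)*(y 1*y 1) + (3:ℂ)*(y 1*y 2)) := by
  funext y; simp [FLV]; ring

lemma FLV2_shape : FLV 2 = fun y : E3 => (3:ℂ)*(y 1*y 2) + ((-1:ℂ)*(y 2*y 2) + (0:ℂ)*(y 0*y 0)) := by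
  funext y; simp [FLV]; ring

lemma DFLV00 (x : E3) : DD 0 (FLV 0) x = 4*x 0 + 2*x 1 + x 2 := by
  rw [FLV0_shape, DD_quad]; simp only [fin10,fin20,fin01,fin21,fin02,fin12,fin00,fin11,fin22,if_true,if_false]; ring
lemma DFLV01 (x : E3) : DD 1 (FLV 0) x = 2*x 0 := by
  rw [FLV0_shape, DD_quad]; simp only [fin10,fin20,fin01,fin21,fin02,fin12,fin00,fin11,fin22,if_true,if_false]; ring
lemma DFLV02 (x : E3) : DD 2 (FLV 0) x = x 0 := by
  rw [FLV0_shape, DD_quad]; simp only [fin10,fin20,fin01,fin21,fin02,fin12,fin00,fin11,fin22,if_true,if_false]; ring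
lemma DFLV10 (x : E3) : DD 0 (FLV 1) x = -(x 1) := by
  rw [FLV1_shape, DD_quad]; simp only [fin10,fin20,fin01,fin21,fin02,fin12,fin00,fin11,fin22,if_true,if_false]; ring
lemma DFLV11 (x : E3) : DD 1 (FLV 1) x = -(x 0) + 2*x 1 + 3*x 2 := by
  rw [FLV1_shape, DD_quad]; simp only [fin10,fin20,fin01,fin21,fin02,fin12,fin00,fin11,fin22,if_true,if_false]; ring
lemma DFLV12 (x : E3) : DD 2 (FLV 1) x = 3*x 1 := by
  rw [FLV1_shape, DD_quad]; simp only [fin10,fin20,fin01,fin21,fin02,fin12,fin00,fin11,fin22,if_true,if_false]; ring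
lemma DFLV20 (x : E3) : DD 0 (FLV 2) x = 0 := by
  rw [FLV2_shape, DD_quad]; simp only [fin10,fin20,fin01,fin21,fin02,fin12,fin00,fin11,fin22,if_true,if_false]; ring
lemma DFLV21 (x : E3) : DD 1 (FLV 2) x = 3*x 2 := by
  rw [FLV2_shape, DD_quad]; simp only [fin10,fin20,fin01,fin21,fin02,fin12,fin00,fin11,fin22,if_true,if_false]; ring
lemma DFLV22 (x : E3) : DD 2 (FLV 2) x = 3*x 1 - 2*x 2 := by
  rw [FLV2_shape, DD_quad]; simp only [fin10,fin20,fin01,fin21,fin02,fin12,fin00,fin11,fin22,if_true,if_false]; ring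

lemma an_FLV (U : Set E3) (i : Fin 3) : AnalyticOnNhd ℂ (FLV i) U := by
  fin_cases i
  · show AnalyticOnNhd ℂ (FLV 0) U
    rw [show FLV (0 : Fin 3) = _ from FLV0_shape]
    exact an_add (an_const_mul (an_coord_mul (an_coord 0) 0) _)
      (an_add (an_const_mul (an_coord_mul (an_coord 1) 0) _)
        (an_const_mul (an_coord_mul (an_coord 2) 0) _))
  · show AnalyticOnNhd ℂ (FLV 1) U
    rw [show FLV (1 : Fin 3) = _ from FLV1_shape]
    exact an_add (an_const_mul (an_coord_mul (an_coord 1) 0) _)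
      (an_add (an_const_mul (an_coord_mul (an_coord 1) 1) _)
        (an_const_mul (an_coord_mul (an_coord 2) 1) _))
  · show AnalyticOnNhd ℂ (FLV 2) U
    rw [show FLV (2 : Fin 3) = _ from FLV2_shape]
    exact an_add (an_const_mul (an_coord_mul (an_coord 2) 1) _)
      (an_add (an_const_mul (an_coord_mul (an_coord 2) 2) _)
        (an_const_mul (an_coord_mul (an_coord 0) 0) _))

end PartC2

section KeyE

variable {U : Set E3} (hU : IsOpen U) (h0 : (0:E3) ∈ U)

include hU h0 in
lemma keyE0 {v0 v1 v2 : E3 → ℂ}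
    (av0 : AnalyticOnNhd ℂ v0 U) (av1 : AnalyticOnNhd ℂ v1 U) (av2 : AnalyticOnNhd ℂ v2 U)
    (hid : ∀ x ∈ U,
      (FLV 0 x * DD 0 v0 x + FLV 1 x * DD 1 v0 x + FLV 2 x * DD 2 v0 x)
      - (v0 x * DD 0 (FLV 0) x + v1 x * DD 1 (FLV 0) x + v2 x * DD 2 (FLV 0) x) = 0)
    (a b c : ℕ) :
    (a:ℂ)*(2*(a:ℂ)-(b:ℂ)-6) * Dk (a-1) b c v0 0
      + (b:ℂ)*(2*(a:ℂ)+(b:ℂ)+3*(c:ℂ)-3) * Dk a (b-1) c v0 0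
      + (c:ℂ)*((a:ℂ)+3*(b:ℂ)-(c:ℂ)) * Dk a b (c-1) v0 0
      - 2*(a:ℂ) * Dk (a-1) b c v1 0 - (a:ℂ) * Dk (a-1) b c v2 0 = 0 := by
  have hg0 : AnalyticOnNhd ℂ (DD 0 v0) U := an_DD av0 0
  have hg1 : AnalyticOnNhd ℂ (DD 1 v0) U := an_DD av0 1
  have hg2 : AnalyticOnNhd ℂ (DD 2 v0) U := an_DD av0 2
  have t1 : AnalyticOnNhd ℂ (fun x => 2*(x 0*(x 0*DD 0 v0 x))) U := an_const_mul (an_coord_mul (an_coord_mul hg0 0) 0) 2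
  have t2 : AnalyticOnNhd ℂ (fun x => 2*(x 0*(x 1*DD 0 v0 x))) U := an_const_mul (an_coord_mul (an_coord_mul hg0 1) 0) 2
  have t3 : AnalyticOnNhd ℂ (fun x => 1*(x 0*(x 2*DD 0 v0 x))) U := an_const_mul (an_coord_mul (an_coord_mul hg0 2) 0) 1
  have t4 : AnalyticOnNhd ℂ (fun x => (-1)*(x 0*(x 1*DD 1 v0 x))) U := an_const_mul (an_coord_mul (an_coord_mul hg1 1) 0) (-1)
  have t5 : AnalyticOnNhd ℂ (fun x => 1*(x 1*(x 1*DD 1 v0 x))) U := an_const_mul (an_coord_mul (an_coord_mul hg1 1) 1) 1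
  have t6 : AnalyticOnNhd ℂ (fun x => 3*(x 1*(x 2*DD 1 v0 x))) U := an_const_mul (an_coord_mul (an_coord_mul hg1 2) 1) 3
  have t7 : AnalyticOnNhd ℂ (fun x => 3*(x 1*(x 2*DD 2 v0 x))) U := an_const_mul (an_coord_mul (an_coord_mul hg2 2) 1) 3
  have t8 : AnalyticOnNhd ℂ (fun x => (-1)*(x 2*(x 2*DD 2 v0 x))) U := an_const_mul (an_coord_mul (an_coord_mul hg2 2) 2) (-1)
  have t9 : AnalyticOnNhd ℂ (fun x => (-4)*(x 0*v0 x)) U := an_const_mul (an_coord_mul av0 0) (-4)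
  have t10 : AnalyticOnNhd ℂ (fun x => (-2)*(x 1*v0 x)) U := an_const_mul (an_coord_mul av0 1) (-2)
  have t11 : AnalyticOnNhd ℂ (fun x => (-1)*(x 2*v0 x)) U := an_const_mul (an_coord_mul av0 2) (-1)
  have t12 : AnalyticOnNhd ℂ (fun x => (-2)*(x 0*v1 x)) U := an_const_mul (an_coord_mul av1 0) (-2)
  have t13 : AnalyticOnNhd ℂ (fun x => (-1)*(x 0*v2 x)) U := an_const_mul (an_coord_mul av2 0) (-1)
  have s13 := t13
  have s12 := an_add t12 s13
  have s11 := an_add t11 s12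
  have s10 := an_add t10 s11
  have s9 := an_add t9 s10
  have s8 := an_add t8 s9
  have s7 := an_add t7 s8
  have s6 := an_add t6 s7
  have s5 := an_add t5 s6
  have s4 := an_add t4 s5
  have s3 := an_add t3 s4
  have s2 := an_add t2 s3
  have s1 := an_add t1 s2
  have hG : Set.EqOn (fun x : E3 => 2*(x 0*(x 0*DD 0 v0 x)) + (2*(x 0*(x 1*DD 0 v0 x)) + (1*(x 0*(x 2*DD 0 v0 x)) + ((-1)*(x 0*(x 1*DD 1 v0 x)) + (1*(x 1*(x 1*DD 1 v0 x)) + (3*(x 1*(x 2*DD 1 v0 x)) + (3*(x 1*(x 2*DD 2 v0 x)) + ((-1)*(x 2*(x 2*DD 2 v0 x)) + ((-4)*(x 0*v0 x) + ((-2)*(x 1*v0 x) + ((-1)*(x 2*v0 x) + ((-2)*(x 0*v1 x) + ((-1)*(x 0*v2 x)))))))))))))) (fun _ => (0:ℂ)) U := by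
    intro x hx
    have h := hid x hx
    have e0 : FLV 0 x = 2 * (x 0) ^ 2 + 2 * x 0 * x 1 + x 0 * x 2 := by simp [FLV]
    have e1 : FLV 1 x = -(x 0 * x 1) + (x 1) ^ 2 + 3 * x 1 * x 2 := by simp [FLV]
    have e2 : FLV 2 x = 3 * x 1 * x 2 - (x 2) ^ 2 := by simp [FLV]
    rw [e0, e1, e2, DFLV00 x, DFLV01 x, DFLV02 x] at h
    show _ = (0:ℂ)
    linear_combination h
  have hz : Dk a b c (fun x : E3 => 2*(x 0*(x 0*DD 0 v0 x)) + (2*(x 0*(x 1*DD 0 v0 x)) + (1*(x 0*(x 2*DD 0 v0 x)) + ((-1)*(x 0*(x 1*DD 1 v0 x)) + (1*(x 1*(x 1*DD 1 v0 x)) + (3*(x 1*(x 2*DD 1 v0 x)) + (3*(x 1*(x 2*DD 2 v0 x)) + ((-1)*(x 2*(x 2*DD 2 v0 x)) + ((-4)*(x 0*v0 x) + ((-2)*(x 1*v0 x) + ((-1)*(x 2*v0 x) + ((-2)*(x 0*v1 x) + ((-1)*(x 0*v2 x)))))))))))))) 0 = 0 := by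
    rw [Dk_congr hU hG a b c h0]; exact Dk_zero a b c 0
  rw [Dk_add0 hU h0 t1 s2 a b c] at hz
  rw [Dk_add0 hU h0 t2 s3 a b c] at hz
  rw [Dk_add0 hU h0 t3 s4 a b c] at hz
  rw [Dk_add0 hU h0 t4 s5 a b c] at hz
  rw [Dk_add0 hU h0 t5 s6 a b c] at hz
  rw [Dk_add0 hU h0 t6 s7 a b c] at hz
  rw [Dk_add0 hU h0 t7 s8 a b c] at hz
  rw [Dk_add0 hU h0 t8 s9 a b c] at hz
  rw [Dk_add0 hU h0 t9 s10 a b c] at hz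
  rw [Dk_add0 hU h0 t10 s11 a b c] at hz
  rw [Dk_add0 hU h0 t11 s12 a b c] at hz
  rw [Dk_add0 hU h0 t12 s13 a b c] at hz
  rw [Dk_cm0 hU h0 (an_coord_mul (an_coord_mul hg0 0) 0) 2 a b c] at hz
  rw [Dk_cm0 hU h0 (an_coord_mul (an_coord_mul hg0 1) 0) 2 a b c] at hz
  rw [Dk_cm0 hU h0 (an_coord_mul (an_coord_mul hg0 2) 0) 1 a b c] at hz
  rw [Dk_cm0 hU h0 (an_coord_mul (an_coord_mul hg1 1) 0) (-1) a b c] at hz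
  rw [Dk_cm0 hU h0 (an_coord_mul (an_coord_mul hg1 1) 1) 1 a b c] at hz
  rw [Dk_cm0 hU h0 (an_coord_mul (an_coord_mul hg1 2) 1) 3 a b c] at hz
  rw [Dk_cm0 hU h0 (an_coord_mul (an_coord_mul hg2 2) 1) 3 a b c] at hz
  rw [Dk_cm0 hU h0 (an_coord_mul (an_coord_mul hg2 2) 2) (-1) a b c] at hz
  rw [Dk_cm0 hU h0 (an_coord_mul av0 0) (-4) a b c] at hz
  rw [Dk_cm0 hU h0 (an_coord_mul av0 1) (-2) a b c] at hz
  rw [Dk_cm0 hU h0 (an_coord_mul av0 2) (-1) a b c] at hz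
  rw [Dk_cm0 hU h0 (an_coord_mul av1 0) (-2) a b c] at hz
  rw [Dk_cm0 hU h0 (an_coord_mul av2 0) (-1) a b c] at hz
  rw [q00 hU h0 hg0 a b c] at hz
  rw [q01 hU h0 hg0 a b c] at hz
  rw [q02 hU h0 hg0 a b c] at hz
  rw [q01 hU h0 hg1 a b c] at hz
  rw [q11 hU h0 hg1 a b c] at hz
  rw [q12 hU h0 hg1 a b c] at hz
  rw [q12 hU h0 hg2 a b c] at hz
  rw [q22 hU h0 hg2 a b c] at hz
  rw [rem0 hU h0 av0 a b c] at hz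
  rw [rem1 hU h0 av0 a b c] at hz
  rw [rem2 hU h0 av0 a b c] at hz
  rw [rem0 hU h0 av1 a b c] at hz
  rw [rem0 hU h0 av2 a b c] at hz
  rw [pu0 hU h0 av0 (a-1-1) b c] at hz
  rw [pu0 hU h0 av0 (a-1) (b-1) c] at hz
  rw [pu0 hU h0 av0 (a-1) b (c-1)] at hz
  rw [pu1 hU h0 av0 (a-1) (b-1) c] at hz
  rw [pu1 hU h0 av0 a (b-1-1) c] at hz
  rw [pu1 hU h0 av0 a (b-1) (c-1)] at hz
  rw [pu2 v0 a (b-1) (c-1)] at hz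
  rw [pu2 v0 a b (c-1-1)] at hz
  have co1 : ((a-1:ℕ):ℂ) * Dk (a-1-1+1) b c v0 0 = ((a-1:ℕ):ℂ) * Dk (a-1) b c v0 0 := cast_collapse (a-1) (fun m => Dk m b c v0 0)
  have co2 : (a:ℂ) * Dk (a-1+1) (b-1) c v0 0 = (a:ℂ) * Dk a (b-1) c v0 0 := cast_collapse a (fun m => Dk m (b-1) c v0 0)
  have co3 : (a:ℂ) * Dk (a-1+1) b (c-1) v0 0 = (a:ℂ) * Dk a b (c-1) v0 0 := cast_collapse a (fun m => Dk m b (c-1) v0 0)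
  have co4 : (b:ℂ) * Dk (a-1) (b-1+1) c v0 0 = (b:ℂ) * Dk (a-1) b c v0 0 := cast_collapse b (fun m => Dk (a-1) m c v0 0)
  have co5 : ((b-1:ℕ):ℂ) * Dk a (b-1-1+1) c v0 0 = ((b-1:ℕ):ℂ) * Dk a (b-1) c v0 0 := cast_collapse (b-1) (fun m => Dk a m c v0 0)
  have co6 : (b:ℂ) * Dk a (b-1+1) (c-1) v0 0 = (b:ℂ) * Dk a b (c-1) v0 0 := cast_collapse b (fun m => Dk a m (c-1) v0 0)
  have co7 : (c:ℂ) * Dk a (b-1) (c-1+1) v0 0 = (c:ℂ) * Dk a (b-1) c v0 0 := cast_collapse c (fun m => Dk a (b-1) m v0 0)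
  have co8 : ((c-1:ℕ):ℂ) * Dk a b (c-1-1+1) v0 0 = ((c-1:ℕ):ℂ) * Dk a b (c-1) v0 0 := cast_collapse (c-1) (fun m => Dk a b m v0 0)
  have pr1 : (a:ℂ) * (((a-1:ℕ):ℂ) * Dk (a-1) b c v0 0) = (a:ℂ) * (((a:ℂ)-1) * Dk (a-1) b c v0 0) := cast_pred_mul a _
  have pr5 : (b:ℂ) * (((b-1:ℕ):ℂ) * Dk a (b-1) c v0 0) = (b:ℂ) * (((b:ℂ)-1) * Dk a (b-1) c v0 0) := cast_pred_mul b _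
  have pr8 : (c:ℂ) * (((c-1:ℕ):ℂ) * Dk a b (c-1) v0 0) = (c:ℂ) * (((c:ℂ)-1) * Dk a b (c-1) v0 0) := cast_pred_mul c _
  linear_combination hz - 2*pr1 - 2*(a:ℂ)*co1 - 2*(b:ℂ)*co2 - (c:ℂ)*co3 + (a:ℂ)*co4 - pr5 - (b:ℂ)*co5 - 3*(c:ℂ)*co6 - 3*(b:ℂ)*co7 + pr8 + (c:ℂ)*co8

include hU h0 in
lemma keyE1 {v0 v1 v2 : E3 → ℂ}
    (av0 : AnalyticOnNhd ℂ v0 U) (av1 : AnalyticOnNhd ℂ v1 U) (av2 : AnalyticOnNhd ℂ v2 U)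
    (hid : ∀ x ∈ U,
      (FLV 0 x * DD 0 v1 x + FLV 1 x * DD 1 v1 x + FLV 2 x * DD 2 v1 x)
      - (v0 x * DD 0 (FLV 1) x + v1 x * DD 1 (FLV 1) x + v2 x * DD 2 (FLV 1) x) = 0)
    (a b c : ℕ) :
    (a:ℂ)*(2*(a:ℂ)-(b:ℂ)-1) * Dk (a-1) b c v1 0
      + (b:ℂ)*(2*(a:ℂ)+(b:ℂ)+3*(c:ℂ)-3) * Dk a (b-1) c v1 0
      + (c:ℂ)*((a:ℂ)+3*(b:ℂ)-(c:ℂ)-2) * Dk a b (c-1) v1 0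
      + (b:ℂ) * Dk a (b-1) c v0 0 - 3*(b:ℂ) * Dk a (b-1) c v2 0 = 0 := by
  have hg0 : AnalyticOnNhd ℂ (DD 0 v1) U := an_DD av1 0
  have hg1 : AnalyticOnNhd ℂ (DD 1 v1) U := an_DD av1 1
  have hg2 : AnalyticOnNhd ℂ (DD 2 v1) U := an_DD av1 2
  have t1 : AnalyticOnNhd ℂ (fun x => 2*(x 0*(x 0*DD 0 v1 x))) U := an_const_mul (an_coord_mul (an_coord_mul hg0 0) 0) 2
  have t2 : AnalyticOnNhd ℂ (fun x => 2*(x 0*(x 1*DD 0 v1 x))) U := an_const_mul (an_coord_mul (an_coord_mul hg0 1) 0) 2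
  have t3 : AnalyticOnNhd ℂ (fun x => 1*(x 0*(x 2*DD 0 v1 x))) U := an_const_mul (an_coord_mul (an_coord_mul hg0 2) 0) 1
  have t4 : AnalyticOnNhd ℂ (fun x => (-1)*(x 0*(x 1*DD 1 v1 x))) U := an_const_mul (an_coord_mul (an_coord_mul hg1 1) 0) (-1)
  have t5 : AnalyticOnNhd ℂ (fun x => 1*(x 1*(x 1*DD 1 v1 x))) U := an_const_mul (an_coord_mul (an_coord_mul hg1 1) 1) 1
  have t6 : AnalyticOnNhd ℂ (fun x => 3*(x 1*(x 2*DD 1 v1 x))) U := an_const_mul (an_coord_mul (an_coord_mul hg1 2) 1) 3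
  have t7 : AnalyticOnNhd ℂ (fun x => 3*(x 1*(x 2*DD 2 v1 x))) U := an_const_mul (an_coord_mul (an_coord_mul hg2 2) 1) 3
  have t8 : AnalyticOnNhd ℂ (fun x => (-1)*(x 2*(x 2*DD 2 v1 x))) U := an_const_mul (an_coord_mul (an_coord_mul hg2 2) 2) (-1)
  have t9 : AnalyticOnNhd ℂ (fun x => 1*(x 1*v0 x)) U := an_const_mul (an_coord_mul av0 1) 1
  have t10 : AnalyticOnNhd ℂ (fun x => 1*(x 0*v1 x)) U := an_const_mul (an_coord_mul av1 0) 1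
  have t11 : AnalyticOnNhd ℂ (fun x => (-2)*(x 1*v1 x)) U := an_const_mul (an_coord_mul av1 1) (-2)
  have t12 : AnalyticOnNhd ℂ (fun x => (-3)*(x 2*v1 x)) U := an_const_mul (an_coord_mul av1 2) (-3)
  have t13 : AnalyticOnNhd ℂ (fun x => (-3)*(x 1*v2 x)) U := an_const_mul (an_coord_mul av2 1) (-3)
  have s13 := t13
  have s12 := an_add t12 s13
  have s11 := an_add t11 s12
  have s10 := an_add t10 s11
  have s9 := an_add t9 s10
  have s8 := an_add t8 s9
  have s7 := an_add t7 s8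
  have s6 := an_add t6 s7
  have s5 := an_add t5 s6
  have s4 := an_add t4 s5
  have s3 := an_add t3 s4
  have s2 := an_add t2 s3
  have s1 := an_add t1 s2
  have hG : Set.EqOn (fun x : E3 => 2*(x 0*(x 0*DD 0 v1 x)) + (2*(x 0*(x 1*DD 0 v1 x)) + (1*(x 0*(x 2*DD 0 v1 x)) + ((-1)*(x 0*(x 1*DD 1 v1 x)) + (1*(x 1*(x 1*DD 1 v1 x)) + (3*(x 1*(x 2*DD 1 v1 x)) + (3*(x 1*(x 2*DD 2 v1 x)) + ((-1)*(x 2*(x 2*DD 2 v1 x)) + (1*(x 1*v0 x) + (1*(x 0*v1 x) + ((-2)*(x 1*v1 x) + ((-3)*(x 2*v1 x) + ((-3)*(x 1*v2 x)))))))))))))) (fun _ => (0:ℂ)) U := by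
    intro x hx
    have h := hid x hx
    have e0 : FLV 0 x = 2 * (x 0) ^ 2 + 2 * x 0 * x 1 + x 0 * x 2 := by simp [FLV]
    have e1 : FLV 1 x = -(x 0 * x 1) + (x 1) ^ 2 + 3 * x 1 * x 2 := by simp [FLV]
    have e2 : FLV 2 x = 3 * x 1 * x 2 - (x 2) ^ 2 := by simp [FLV]
    rw [e0, e1, e2, DFLV10 x, DFLV11 x, DFLV12 x] at h
    show _ = (0:ℂ)
    linear_combination h
  have hz : Dk a b c (fun x : E3 => 2*(x 0*(x 0*DD 0 v1 x)) + (2*(x 0*(x 1*DD 0 v1 x)) + (1*(x 0*(x 2*DD 0 v1 x)) + ((-1)*(x 0*(x 1*DD 1 v1 x)) + (1*(x 1*(x 1*DD 1 v1 x)) + (3*(x 1*(x 2*DD 1 v1 x)) + (3*(x 1*(x 2*DD 2 v1 x)) + ((-1)*(x 2*(x 2*DD 2 v1 x)) + (1*(x 1*v0 x) + (1*(x 0*v1 x) + ((-2)*(x 1*v1 x) + ((-3)*(x 2*v1 x) + ((-3)*(x 1*v2 x)))))))))))))) 0 = 0 := by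
    rw [Dk_congr hU hG a b c h0]; exact Dk_zero a b c 0
  rw [Dk_add0 hU h0 t1 s2 a b c] at hz
  rw [Dk_add0 hU h0 t2 s3 a b c] at hz
  rw [Dk_add0 hU h0 t3 s4 a b c] at hz
  rw [Dk_add0 hU h0 t4 s5 a b c] at hz
  rw [Dk_add0 hU h0 t5 s6 a b c] at hz
  rw [Dk_add0 hU h0 t6 s7 a b c] at hz
  rw [Dk_add0 hU h0 t7 s8 a b c] at hz
  rw [Dk_add0 hU h0 t8 s9 a b c] at hz
  rw [Dk_add0 hU h0 t9 s10 a b c] at hz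
  rw [Dk_add0 hU h0 t10 s11 a b c] at hz
  rw [Dk_add0 hU h0 t11 s12 a b c] at hz
  rw [Dk_add0 hU h0 t12 s13 a b c] at hz
  rw [Dk_cm0 hU h0 (an_coord_mul (an_coord_mul hg0 0) 0) 2 a b c] at hz
  rw [Dk_cm0 hU h0 (an_coord_mul (an_coord_mul hg0 1) 0) 2 a b c] at hz
  rw [Dk_cm0 hU h0 (an_coord_mul (an_coord_mul hg0 2) 0) 1 a b c] at hz
  rw [Dk_cm0 hU h0 (an_coord_mul (an_coord_mul hg1 1) 0) (-1) a b c] at hz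
  rw [Dk_cm0 hU h0 (an_coord_mul (an_coord_mul hg1 1) 1) 1 a b c] at hz
  rw [Dk_cm0 hU h0 (an_coord_mul (an_coord_mul hg1 2) 1) 3 a b c] at hz
  rw [Dk_cm0 hU h0 (an_coord_mul (an_coord_mul hg2 2) 1) 3 a b c] at hz
  rw [Dk_cm0 hU h0 (an_coord_mul (an_coord_mul hg2 2) 2) (-1) a b c] at hz
  rw [Dk_cm0 hU h0 (an_coord_mul av0 1) 1 a b c] at hz
  rw [Dk_cm0 hU h0 (an_coord_mul av1 0) 1 a b c] at hz
  rw [Dk_cm0 hU h0 (an_coord_mul av1 1) (-2) a b c] at hz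
  rw [Dk_cm0 hU h0 (an_coord_mul av1 2) (-3) a b c] at hz
  rw [Dk_cm0 hU h0 (an_coord_mul av2 1) (-3) a b c] at hz
  rw [q00 hU h0 hg0 a b c] at hz
  rw [q01 hU h0 hg0 a b c] at hz
  rw [q02 hU h0 hg0 a b c] at hz
  rw [q01 hU h0 hg1 a b c] at hz
  rw [q11 hU h0 hg1 a b c] at hz
  rw [q12 hU h0 hg1 a b c] at hz
  rw [q12 hU h0 hg2 a b c] at hz
  rw [q22 hU h0 hg2 a b c] at hz
  rw [rem1 hU h0 av0 a b c] at hz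
  rw [rem0 hU h0 av1 a b c] at hz
  rw [rem1 hU h0 av1 a b c] at hz
  rw [rem2 hU h0 av1 a b c] at hz
  rw [rem1 hU h0 av2 a b c] at hz
  rw [pu0 hU h0 av1 (a-1-1) b c] at hz
  rw [pu0 hU h0 av1 (a-1) (b-1) c] at hz
  rw [pu0 hU h0 av1 (a-1) b (c-1)] at hz
  rw [pu1 hU h0 av1 (a-1) (b-1) c] at hz
  rw [pu1 hU h0 av1 a (b-1-1) c] at hz
  rw [pu1 hU h0 av1 a (b-1) (c-1)] at hz
  rw [pu2 v1 a (b-1) (c-1)] at hz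
  rw [pu2 v1 a b (c-1-1)] at hz
  have co1 : ((a-1:ℕ):ℂ) * Dk (a-1-1+1) b c v1 0 = ((a-1:ℕ):ℂ) * Dk (a-1) b c v1 0 := cast_collapse (a-1) (fun m => Dk m b c v1 0)
  have co2 : (a:ℂ) * Dk (a-1+1) (b-1) c v1 0 = (a:ℂ) * Dk a (b-1) c v1 0 := cast_collapse a (fun m => Dk m (b-1) c v1 0)
  have co3 : (a:ℂ) * Dk (a-1+1) b (c-1) v1 0 = (a:ℂ) * Dk a b (c-1) v1 0 := cast_collapse a (fun m => Dk m b (c-1) v1 0)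
  have co4 : (b:ℂ) * Dk (a-1) (b-1+1) c v1 0 = (b:ℂ) * Dk (a-1) b c v1 0 := cast_collapse b (fun m => Dk (a-1) m c v1 0)
  have co5 : ((b-1:ℕ):ℂ) * Dk a (b-1-1+1) c v1 0 = ((b-1:ℕ):ℂ) * Dk a (b-1) c v1 0 := cast_collapse (b-1) (fun m => Dk a m c v1 0)
  have co6 : (b:ℂ) * Dk a (b-1+1) (c-1) v1 0 = (b:ℂ) * Dk a b (c-1) v1 0 := cast_collapse b (fun m => Dk a m (c-1) v1 0)
  have co7 : (c:ℂ) * Dk a (b-1) (c-1+1) v1 0 = (c:ℂ) * Dk a (b-1) c v1 0 := cast_collapse c (fun m => Dk a (b-1) m v1 0)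
  have co8 : ((c-1:ℕ):ℂ) * Dk a b (c-1-1+1) v1 0 = ((c-1:ℕ):ℂ) * Dk a b (c-1) v1 0 := cast_collapse (c-1) (fun m => Dk a b m v1 0)
  have pr1 : (a:ℂ) * (((a-1:ℕ):ℂ) * Dk (a-1) b c v1 0) = (a:ℂ) * (((a:ℂ)-1) * Dk (a-1) b c v1 0) := cast_pred_mul a _
  have pr5 : (b:ℂ) * (((b-1:ℕ):ℂ) * Dk a (b-1) c v1 0) = (b:ℂ) * (((b:ℂ)-1) * Dk a (b-1) c v1 0) := cast_pred_mul b _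
  have pr8 : (c:ℂ) * (((c-1:ℕ):ℂ) * Dk a b (c-1) v1 0) = (c:ℂ) * (((c:ℂ)-1) * Dk a b (c-1) v1 0) := cast_pred_mul c _
  linear_combination hz - 2*pr1 - 2*(a:ℂ)*co1 - 2*(b:ℂ)*co2 - (c:ℂ)*co3 + (a:ℂ)*co4 - pr5 - (b:ℂ)*co5 - 3*(c:ℂ)*co6 - 3*(b:ℂ)*co7 + pr8 + (c:ℂ)*co8

include hU h0 in
lemma keyE2 {v0 v1 v2 : E3 → ℂ}
    (av0 : AnalyticOnNhd ℂ v0 U) (av1 : AnalyticOnNhd ℂ v1 U) (av2 : AnalyticOnNhd ℂ v2 U)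
    (hid : ∀ x ∈ U,
      (FLV 0 x * DD 0 v2 x + FLV 1 x * DD 1 v2 x + FLV 2 x * DD 2 v2 x)
      - (v0 x * DD 0 (FLV 2) x + v1 x * DD 1 (FLV 2) x + v2 x * DD 2 (FLV 2) x) = 0)
    (a b c : ℕ) :
    (a:ℂ)*(2*(a:ℂ)-(b:ℂ)-2) * Dk (a-1) b c v2 0
      + (b:ℂ)*(2*(a:ℂ)+(b:ℂ)+3*(c:ℂ)-4) * Dk a (b-1) c v2 0
      + (c:ℂ)*((a:ℂ)+3*(b:ℂ)-(c:ℂ)+3) * Dk a b (c-1) v2 0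
      - 3*(c:ℂ) * Dk a b (c-1) v1 0 = 0 := by
  have hg0 : AnalyticOnNhd ℂ (DD 0 v2) U := an_DD av2 0
  have hg1 : AnalyticOnNhd ℂ (DD 1 v2) U := an_DD av2 1
  have hg2 : AnalyticOnNhd ℂ (DD 2 v2) U := an_DD av2 2
  have t1 : AnalyticOnNhd ℂ (fun x => 2*(x 0*(x 0*DD 0 v2 x))) U := an_const_mul (an_coord_mul (an_coord_mul hg0 0) 0) 2
  have t2 : AnalyticOnNhd ℂ (fun x => 2*(x 0*(x 1*DD 0 v2 x))) U := an_const_mul (an_coord_mul (an_coord_mul hg0 1) 0) 2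
  have t3 : AnalyticOnNhd ℂ (fun x => 1*(x 0*(x 2*DD 0 v2 x))) U := an_const_mul (an_coord_mul (an_coord_mul hg0 2) 0) 1
  have t4 : AnalyticOnNhd ℂ (fun x => (-1)*(x 0*(x 1*DD 1 v2 x))) U := an_const_mul (an_coord_mul (an_coord_mul hg1 1) 0) (-1)
  have t5 : AnalyticOnNhd ℂ (fun x => 1*(x 1*(x 1*DD 1 v2 x))) U := an_const_mul (an_coord_mul (an_coord_mul hg1 1) 1) 1
  have t6 : AnalyticOnNhd ℂ (fun x => 3*(x 1*(x 2*DD 1 v2 x))) U := an_const_mul (an_coord_mul (an_coord_mul hg1 2) 1) 3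
  have t7 : AnalyticOnNhd ℂ (fun x => 3*(x 1*(x 2*DD 2 v2 x))) U := an_const_mul (an_coord_mul (an_coord_mul hg2 2) 1) 3
  have t8 : AnalyticOnNhd ℂ (fun x => (-1)*(x 2*(x 2*DD 2 v2 x))) U := an_const_mul (an_coord_mul (an_coord_mul hg2 2) 2) (-1)
  have t9 : AnalyticOnNhd ℂ (fun x => (-3)*(x 2*v1 x)) U := an_const_mul (an_coord_mul av1 2) (-3)
  have t10 : AnalyticOnNhd ℂ (fun x => (-3)*(x 1*v2 x)) U := an_const_mul (an_coord_mul av2 1) (-3)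
  have t11 : AnalyticOnNhd ℂ (fun x => 2*(x 2*v2 x)) U := an_const_mul (an_coord_mul av2 2) 2
  have s11 := t11
  have s10 := an_add t10 s11
  have s9 := an_add t9 s10
  have s8 := an_add t8 s9
  have s7 := an_add t7 s8
  have s6 := an_add t6 s7
  have s5 := an_add t5 s6
  have s4 := an_add t4 s5
  have s3 := an_add t3 s4
  have s2 := an_add t2 s3
  have s1 := an_add t1 s2
  have hG : Set.EqOn (fun x : E3 => 2*(x 0*(x 0*DD 0 v2 x)) + (2*(x 0*(x 1*DD 0 v2 x)) + (1*(x 0*(x 2*DD 0 v2 x)) + ((-1)*(x 0*(x 1*DD 1 v2 x)) + (1*(x 1*(x 1*DD 1 v2 x)) + (3*(x 1*(x 2*DD 1 v2 x)) + (3*(x 1*(x 2*DD 2 v2 x)) + ((-1)*(x 2*(x 2*DD 2 v2 x)) + ((-3)*(x 2*v1 x) + ((-3)*(x 1*v2 x) + (2*(x 2*v2 x)))))))))))) (fun _ => (0:ℂ)) U := by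
    intro x hx
    have h := hid x hx
    have e0 : FLV 0 x = 2 * (x 0) ^ 2 + 2 * x 0 * x 1 + x 0 * x 2 := by simp [FLV]
    have e1 : FLV 1 x = -(x 0 * x 1) + (x 1) ^ 2 + 3 * x 1 * x 2 := by simp [FLV]
    have e2 : FLV 2 x = 3 * x 1 * x 2 - (x 2) ^ 2 := by simp [FLV]
    rw [e0, e1, e2, DFLV20 x, DFLV21 x, DFLV22 x] at h
    show _ = (0:ℂ)
    linear_combination h
  have hz : Dk a b c (fun x : E3 => 2*(x 0*(x 0*DD 0 v2 x)) + (2*(x 0*(x 1*DD 0 v2 x)) + (1*(x 0*(x 2*DD 0 v2 x)) + ((-1)*(x 0*(x 1*DD 1 v2 x)) + (1*(x 1*(x 1*DD 1 v2 x)) + (3*(x 1*(x 2*DD 1 v2 x)) + (3*(x 1*(x 2*DD 2 v2 x)) + ((-1)*(x 2*(x 2*DD 2 v2 x)) + ((-3)*(x 2*v1 x) + ((-3)*(x 1*v2 x) + (2*(x 2*v2 x)))))))))))) 0 = 0 := by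
    rw [Dk_congr hU hG a b c h0]; exact Dk_zero a b c 0
  rw [Dk_add0 hU h0 t1 s2 a b c] at hz
  rw [Dk_add0 hU h0 t2 s3 a b c] at hz
  rw [Dk_add0 hU h0 t3 s4 a b c] at hz
  rw [Dk_add0 hU h0 t4 s5 a b c] at hz
  rw [Dk_add0 hU h0 t5 s6 a b c] at hz
  rw [Dk_add0 hU h0 t6 s7 a b c] at hz
  rw [Dk_add0 hU h0 t7 s8 a b c] at hz
  rw [Dk_add0 hU h0 t8 s9 a b c] at hz
  rw [Dk_add0 hU h0 t9 s10 a b c] at hz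
  rw [Dk_add0 hU h0 t10 s11 a b c] at hz
  rw [Dk_cm0 hU h0 (an_coord_mul (an_coord_mul hg0 0) 0) 2 a b c] at hz
  rw [Dk_cm0 hU h0 (an_coord_mul (an_coord_mul hg0 1) 0) 2 a b c] at hz
  rw [Dk_cm0 hU h0 (an_coord_mul (an_coord_mul hg0 2) 0) 1 a b c] at hz
  rw [Dk_cm0 hU h0 (an_coord_mul (an_coord_mul hg1 1) 0) (-1) a b c] at hz
  rw [Dk_cm0 hU h0 (an_coord_mul (an_coord_mul hg1 1) 1) 1 a b c] at hz
  rw [Dk_cm0 hU h0 (an_coord_mul (an_coord_mul hg1 2) 1) 3 a b c] at hz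
  rw [Dk_cm0 hU h0 (an_coord_mul (an_coord_mul hg2 2) 1) 3 a b c] at hz
  rw [Dk_cm0 hU h0 (an_coord_mul (an_coord_mul hg2 2) 2) (-1) a b c] at hz
  rw [Dk_cm0 hU h0 (an_coord_mul av1 2) (-3) a b c] at hz
  rw [Dk_cm0 hU h0 (an_coord_mul av2 1) (-3) a b c] at hz
  rw [Dk_cm0 hU h0 (an_coord_mul av2 2) 2 a b c] at hz
  rw [q00 hU h0 hg0 a b c] at hz
  rw [q01 hU h0 hg0 a b c] at hz
  rw [q02 hU h0 hg0 a b c] at hz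
  rw [q01 hU h0 hg1 a b c] at hz
  rw [q11 hU h0 hg1 a b c] at hz
  rw [q12 hU h0 hg1 a b c] at hz
  rw [q12 hU h0 hg2 a b c] at hz
  rw [q22 hU h0 hg2 a b c] at hz
  rw [rem2 hU h0 av1 a b c] at hz
  rw [rem1 hU h0 av2 a b c] at hz
  rw [rem2 hU h0 av2 a b c] at hz
  rw [pu0 hU h0 av2 (a-1-1) b c] at hz
  rw [pu0 hU h0 av2 (a-1) (b-1) c] at hz
  rw [pu0 hU h0 av2 (a-1) b (c-1)] at hz
  rw [pu1 hU h0 av2 (a-1) (b-1) c] at hz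
  rw [pu1 hU h0 av2 a (b-1-1) c] at hz
  rw [pu1 hU h0 av2 a (b-1) (c-1)] at hz
  rw [pu2 v2 a (b-1) (c-1)] at hz
  rw [pu2 v2 a b (c-1-1)] at hz
  have co1 : ((a-1:ℕ):ℂ) * Dk (a-1-1+1) b c v2 0 = ((a-1:ℕ):ℂ) * Dk (a-1) b c v2 0 := cast_collapse (a-1) (fun m => Dk m b c v2 0)
  have co2 : (a:ℂ) * Dk (a-1+1) (b-1) c v2 0 = (a:ℂ) * Dk a (b-1) c v2 0 := cast_collapse a (fun m => Dk m (b-1) c v2 0)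
  have co3 : (a:ℂ) * Dk (a-1+1) b (c-1) v2 0 = (a:ℂ) * Dk a b (c-1) v2 0 := cast_collapse a (fun m => Dk m b (c-1) v2 0)
  have co4 : (b:ℂ) * Dk (a-1) (b-1+1) c v2 0 = (b:ℂ) * Dk (a-1) b c v2 0 := cast_collapse b (fun m => Dk (a-1) m c v2 0)
  have co5 : ((b-1:ℕ):ℂ) * Dk a (b-1-1+1) c v2 0 = ((b-1:ℕ):ℂ) * Dk a (b-1) c v2 0 := cast_collapse (b-1) (fun m => Dk a m c v2 0)
  have co6 : (b:ℂ) * Dk a (b-1+1) (c-1) v2 0 = (b:ℂ) * Dk a b (c-1) v2 0 := cast_collapse b (fun m => Dk a m (c-1) v2 0)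
  have co7 : (c:ℂ) * Dk a (b-1) (c-1+1) v2 0 = (c:ℂ) * Dk a (b-1) c v2 0 := cast_collapse c (fun m => Dk a (b-1) m v2 0)
  have co8 : ((c-1:ℕ):ℂ) * Dk a b (c-1-1+1) v2 0 = ((c-1:ℕ):ℂ) * Dk a b (c-1) v2 0 := cast_collapse (c-1) (fun m => Dk a b m v2 0)
  have pr1 : (a:ℂ) * (((a-1:ℕ):ℂ) * Dk (a-1) b c v2 0) = (a:ℂ) * (((a:ℂ)-1) * Dk (a-1) b c v2 0) := cast_pred_mul a _
  have pr5 : (b:ℂ) * (((b-1:ℕ):ℂ) * Dk a (b-1) c v2 0) = (b:ℂ) * (((b:ℂ)-1) * Dk a (b-1) c v2 0) := cast_pred_mul b _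
  have pr8 : (c:ℂ) * (((c-1:ℕ):ℂ) * Dk a b (c-1) v2 0) = (c:ℂ) * (((c:ℂ)-1) * Dk a b (c-1) v2 0) := cast_pred_mul c _
  linear_combination hz - 2*pr1 - 2*(a:ℂ)*co1 - 2*(b:ℂ)*co2 - (c:ℂ)*co3 + (a:ℂ)*co4 - pr5 - (b:ℂ)*co5 - 3*(c:ℂ)*co6 - 3*(b:ℂ)*co7 + pr8 + (c:ℂ)*co8

end KeyE

set_option maxHeartbeats 4000000 in
lemma coreZero (d0 d1 d2 : ℕ → ℕ → ℕ → ℂ)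
    (hE0 : ∀ a b c : ℕ, (a:ℂ)*(2*(a:ℂ)-(b:ℂ)-6) * d0 (a-1) b c
      + (b:ℂ)*(2*(a:ℂ)+(b:ℂ)+3*(c:ℂ)-3) * d0 a (b-1) c
      + (c:ℂ)*((a:ℂ)+3*(b:ℂ)-(c:ℂ)) * d0 a b (c-1)
      - 2*(a:ℂ) * d1 (a-1) b c - (a:ℂ) * d2 (a-1) b c = 0)
    (hE1 : ∀ a b c : ℕ, (a:ℂ)*(2*(a:ℂ)-(b:ℂ)-1) * d1 (a-1) b c
      + (b:ℂ)*(2*(a:ℂ)+(b:ℂ)+3*(c:ℂ)-3) * d1 a (b-1) c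
      + (c:ℂ)*((a:ℂ)+3*(b:ℂ)-(c:ℂ)-2) * d1 a b (c-1)
      + (b:ℂ) * d0 a (b-1) c - 3*(b:ℂ) * d2 a (b-1) c = 0)
    (hE2 : ∀ a b c : ℕ, (a:ℂ)*(2*(a:ℂ)-(b:ℂ)-2) * d2 (a-1) b c
      + (b:ℂ)*(2*(a:ℂ)+(b:ℂ)+3*(c:ℂ)-4) * d2 a (b-1) c
      + (c:ℂ)*((a:ℂ)+3*(b:ℂ)-(c:ℂ)+3) * d2 a b (c-1)
      - 3*(c:ℂ) * d1 a b (c-1) = 0)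
    (hpin : d0 2 0 0 = 0) :
    ∀ c a b, d0 a b c = 0 ∧ d1 a b c = 0 ∧ d2 a b c = 0 := by
  have E0_0_0_1 : (-1:ℂ) * d0 0 0 0 = 0 := by
    have h := hE0 0 0 1
    simp only [Nat.reduceSub] at h
    linear_combination h
  have E0_1_0_0 : (-4:ℂ) * d0 0 0 0 + (-2:ℂ) * d1 0 0 0 + (-1:ℂ) * d2 0 0 0 = 0 := by
    have h := hE0 1 0 0
    simp only [Nat.reduceSub] at h
    linear_combination h
  have E1_0_0_1 : (-3:ℂ) * d1 0 0 0 = 0 := by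
    have h := hE1 0 0 1
    simp only [Nat.reduceSub] at h
    linear_combination h
  have z0_0_0_0 : d0 0 0 0 = 0 := by
    linear_combination (-1:ℂ) * E0_0_0_1
  have z1_0_0_0 : d1 0 0 0 = 0 := by
    linear_combination ((-1:ℂ)/3) * E1_0_0_1
  have z2_0_0_0 : d2 0 0 0 = 0 := by
    linear_combination (4:ℂ) * E0_0_0_1 + (-1:ℂ) * E0_1_0_0 + ((2:ℂ)/3) * E1_0_0_1
  have E0_0_0_2 : (-4:ℂ) * d0 0 0 1 = 0 := by
    have h := hE0 0 0 2
    simp only [Nat.reduceSub] at h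
    linear_combination h
  have E0_0_1_1 : (1:ℂ) * d0 0 0 1 + (2:ℂ) * d0 0 1 0 = 0 := by
    have h := hE0 0 1 1
    simp only [Nat.reduceSub] at h
    linear_combination h
  have E0_1_0_1 : (-4:ℂ) * d0 0 0 1 + (-2:ℂ) * d1 0 0 1 + (-1:ℂ) * d2 0 0 1 = 0 := by
    have h := hE0 1 0 1
    simp only [Nat.reduceSub] at h
    linear_combination h
  have E0_1_1_0 : (-5:ℂ) * d0 0 1 0 + (-2:ℂ) * d1 0 1 0 + (-1:ℂ) * d2 0 1 0 = 0 := by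
    have h := hE0 1 1 0
    simp only [Nat.reduceSub] at h
    linear_combination h
  have E0_2_0_0 : (-4:ℂ) * d0 1 0 0 + (-4:ℂ) * d1 1 0 0 + (-2:ℂ) * d2 1 0 0 = 0 := by
    have h := hE0 2 0 0
    simp only [Nat.reduceSub] at h
    linear_combination h
  have E1_0_0_2 : (-8:ℂ) * d1 0 0 1 = 0 := by
    have h := hE1 0 0 2
    simp only [Nat.reduceSub] at h
    linear_combination h
  have E1_0_2_0 : (-2:ℂ) * d1 0 1 0 + (2:ℂ) * d0 0 1 0 + (-6:ℂ) * d2 0 1 0 = 0 := by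
    have h := hE1 0 2 0
    simp only [Nat.reduceSub] at h
    linear_combination h
  have E1_1_0_1 : (1:ℂ) * d1 0 0 1 + (-2:ℂ) * d1 1 0 0 = 0 := by
    have h := hE1 1 0 1
    simp only [Nat.reduceSub] at h
    linear_combination h
  have E1_1_1_0 : (1:ℂ) * d0 1 0 0 + (-3:ℂ) * d2 1 0 0 = 0 := by
    have h := hE1 1 1 0
    simp only [Nat.reduceSub] at h
    linear_combination h
  have z0_0_0_1 : d0 0 0 1 = 0 := by
    linear_combination ((-1:ℂ)/4) * E0_0_0_2
  have z0_0_1_0 : d0 0 1 0 = 0 := by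
    linear_combination ((1:ℂ)/8) * E0_0_0_2 + ((1:ℂ)/2) * E0_0_1_1
  have z0_1_0_0 : d0 1 0 0 = 0 := by
    linear_combination ((-3:ℂ)/14) * E0_2_0_0 + ((3:ℂ)/56) * E1_0_0_2 + ((3:ℂ)/7) * E1_1_0_1 + ((1:ℂ)/7) * E1_1_1_0
  have z1_0_0_1 : d1 0 0 1 = 0 := by
    linear_combination ((-1:ℂ)/8) * E1_0_0_2
  have z1_0_1_0 : d1 0 1 0 = 0 := by
    linear_combination ((-2:ℂ)/5) * E0_0_0_2 + ((-8:ℂ)/5) * E0_0_1_1 + ((-3:ℂ)/5) * E0_1_1_0 + ((1:ℂ)/10) * E1_0_2_0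
  have z1_1_0_0 : d1 1 0 0 = 0 := by
    linear_combination ((-1:ℂ)/16) * E1_0_0_2 + ((-1:ℂ)/2) * E1_1_0_1
  have z2_0_0_1 : d2 0 0 1 = 0 := by
    linear_combination (1:ℂ) * E0_0_0_2 + (-1:ℂ) * E0_1_0_1 + ((1:ℂ)/4) * E1_0_0_2
  have z2_0_1_0 : d2 0 1 0 = 0 := by
    linear_combination ((7:ℂ)/40) * E0_0_0_2 + ((7:ℂ)/10) * E0_0_1_1 + ((1:ℂ)/5) * E0_1_1_0 + ((-1:ℂ)/5) * E1_0_2_0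
  have z2_1_0_0 : d2 1 0 0 = 0 := by
    linear_combination ((-1:ℂ)/14) * E0_2_0_0 + ((1:ℂ)/56) * E1_0_0_2 + ((1:ℂ)/7) * E1_1_0_1 + ((-2:ℂ)/7) * E1_1_1_0
  have E0_0_0_3 : (-9:ℂ) * d0 0 0 2 = 0 := by
    have h := hE0 0 0 3
    simp only [Nat.reduceSub] at h
    linear_combination h
  have E0_0_1_2 : (4:ℂ) * d0 0 0 2 + (2:ℂ) * d0 0 1 1 = 0 := by
    have h := hE0 0 1 2
    simp only [Nat.reduceSub] at h
    linear_combination h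
  have E0_0_2_1 : (4:ℂ) * d0 0 1 1 + (5:ℂ) * d0 0 2 0 = 0 := by
    have h := hE0 0 2 1
    simp only [Nat.reduceSub] at h
    linear_combination h
  have E0_1_0_2 : (-4:ℂ) * d0 0 0 2 + (-2:ℂ) * d0 1 0 1 + (-2:ℂ) * d1 0 0 2 + (-1:ℂ) * d2 0 0 2 = 0 := by
    have h := hE0 1 0 2
    simp only [Nat.reduceSub] at h
    linear_combination h
  have E0_1_1_1 : (-5:ℂ) * d0 0 1 1 + (3:ℂ) * d0 1 0 1 + (3:ℂ) * d0 1 1 0 + (-2:ℂ) * d1 0 1 1 + (-1:ℂ) * d2 0 1 1 = 0 := by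
    have h := hE0 1 1 1
    simp only [Nat.reduceSub] at h
    linear_combination h
  have E0_1_2_0 : (-6:ℂ) * d0 0 2 0 + (2:ℂ) * d0 1 1 0 + (-2:ℂ) * d1 0 2 0 + (-1:ℂ) * d2 0 2 0 = 0 := by
    have h := hE0 1 2 0
    simp only [Nat.reduceSub] at h
    linear_combination h
  have E0_2_0_1 : (-4:ℂ) * d0 1 0 1 + (1:ℂ) * d0 2 0 0 + (-4:ℂ) * d1 1 0 1 + (-2:ℂ) * d2 1 0 1 = 0 := by
    have h := hE0 2 0 1
    simp only [Nat.reduceSub] at h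
    linear_combination h
  have E0_2_1_0 : (-6:ℂ) * d0 1 1 0 + (2:ℂ) * d0 2 0 0 + (-4:ℂ) * d1 1 1 0 + (-2:ℂ) * d2 1 1 0 = 0 := by
    have h := hE0 2 1 0
    simp only [Nat.reduceSub] at h
    linear_combination h
  have E0_3_0_0 : (-6:ℂ) * d1 2 0 0 + (-3:ℂ) * d2 2 0 0 = 0 := by
    have h := hE0 3 0 0
    simp only [Nat.reduceSub] at h
    linear_combination h
  have E1_0_0_3 : (-15:ℂ) * d1 0 0 2 = 0 := by
    have h := hE1 0 0 3
    simp only [Nat.reduceSub] at h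
    linear_combination h
  have E1_0_1_2 : (4:ℂ) * d1 0 0 2 + (-2:ℂ) * d1 0 1 1 + (1:ℂ) * d0 0 0 2 + (-3:ℂ) * d2 0 0 2 = 0 := by
    have h := hE1 0 1 2
    simp only [Nat.reduceSub] at h
    linear_combination h
  have E1_0_2_1 : (4:ℂ) * d1 0 1 1 + (3:ℂ) * d1 0 2 0 + (2:ℂ) * d0 0 1 1 + (-6:ℂ) * d2 0 1 1 = 0 := by
    have h := hE1 0 2 1
    simp only [Nat.reduceSub] at h
    linear_combination h
  have E1_0_3_0 : (3:ℂ) * d0 0 2 0 + (-9:ℂ) * d2 0 2 0 = 0 := by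
    have h := hE1 0 3 0
    simp only [Nat.reduceSub] at h
    linear_combination h
  have E1_1_0_2 : (1:ℂ) * d1 0 0 2 + (-6:ℂ) * d1 1 0 1 = 0 := by
    have h := hE1 1 0 2
    simp only [Nat.reduceSub] at h
    linear_combination h
  have E1_1_1_1 : (3:ℂ) * d1 1 0 1 + (1:ℂ) * d1 1 1 0 + (1:ℂ) * d0 1 0 1 + (-3:ℂ) * d2 1 0 1 = 0 := by
    have h := hE1 1 1 1
    simp only [Nat.reduceSub] at h
    linear_combination h
  have E1_1_2_0 : (-1:ℂ) * d1 0 2 0 + (2:ℂ) * d1 1 1 0 + (2:ℂ) * d0 1 1 0 + (-6:ℂ) * d2 1 1 0 = 0 := by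
    have h := hE1 1 2 0
    simp only [Nat.reduceSub] at h
    linear_combination h
  have E1_2_0_1 : (6:ℂ) * d1 1 0 1 + (-1:ℂ) * d1 2 0 0 = 0 := by
    have h := hE1 2 0 1
    simp only [Nat.reduceSub] at h
    linear_combination h
  have z0_0_0_2 : d0 0 0 2 = 0 := by
    linear_combination ((-1:ℂ)/9) * E0_0_0_3
  have z0_0_1_1 : d0 0 1 1 = 0 := by
    linear_combination ((2:ℂ)/9) * E0_0_0_3 + ((1:ℂ)/2) * E0_0_1_2
  have z0_0_2_0 : d0 0 2 0 = 0 := by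
    linear_combination ((-8:ℂ)/45) * E0_0_0_3 + ((-2:ℂ)/5) * E0_0_1_2 + ((1:ℂ)/5) * E0_0_2_1
  have z0_1_0_1 : d0 1 0 1 = 0 := by
    linear_combination ((-76:ℂ)/1125) * E0_0_0_3 + ((893:ℂ)/2250) * E0_0_1_2 + ((-133:ℂ)/4500) * E0_0_2_1 + ((38:ℂ)/75) * E0_1_0_2 + ((19:ℂ)/150) * E0_1_1_1 + ((-7:ℂ)/300) * E0_1_2_0 + ((-7:ℂ)/20) * E0_2_0_1 + ((1:ℂ)/20) * E0_2_1_0 + ((-241:ℂ)/2700) * E1_0_0_3 + ((-38:ℂ)/225) * E1_0_1_2 + ((-19:ℂ)/900) * E1_0_2_1 + ((7:ℂ)/2700) * E1_0_3_0 + ((7:ℂ)/20) * E1_1_0_2 + ((7:ℂ)/30) * E1_1_1_1 + ((-1:ℂ)/60) * E1_1_2_0 + ((1:ℂ)/4) * hpin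
  have z0_1_1_0 : d0 1 1 0 = 0 := by
    linear_combination ((-1076:ℂ)/3375) * E0_0_0_3 + ((2378:ℂ)/1125) * E0_0_1_2 + ((-209:ℂ)/1125) * E0_0_2_1 + ((196:ℂ)/75) * E0_1_0_2 + ((49:ℂ)/75) * E0_1_1_1 + ((-11:ℂ)/75) * E0_1_2_0 + ((-7:ℂ)/10) * E0_2_0_1 + ((1:ℂ)/10) * E0_2_1_0 + ((-721:ℂ)/1350) * E1_0_0_3 + ((-196:ℂ)/225) * E1_0_1_2 + ((-49:ℂ)/450) * E1_0_2_1 + ((11:ℂ)/675) * E1_0_3_0 + ((7:ℂ)/10) * E1_1_0_2 + ((7:ℂ)/15) * E1_1_1_1 + ((-1:ℂ)/30) * E1_1_2_0 + ((1:ℂ)/2) * hpin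
  have z0_2_0_0 : d0 2 0 0 = 0 := by
    linear_combination (1:ℂ) * hpin
  have z1_0_0_2 : d1 0 0 2 = 0 := by
    linear_combination ((-1:ℂ)/15) * E1_0_0_3
  have z1_0_1_1 : d1 0 1 1 = 0 := by
    linear_combination ((-2081:ℂ)/2250) * E0_0_0_3 + ((893:ℂ)/750) * E0_0_1_2 + ((-133:ℂ)/1500) * E0_0_2_1 + ((151:ℂ)/50) * E0_1_0_2 + ((19:ℂ)/50) * E0_1_1_1 + ((-7:ℂ)/100) * E0_1_2_0 + ((-21:ℂ)/20) * E0_2_0_1 + ((3:ℂ)/20) * E0_2_1_0 + ((-541:ℂ)/900) * E1_0_0_3 + ((-151:ℂ)/150) * E1_0_1_2 + ((-19:ℂ)/300) * E1_0_2_1 + ((7:ℂ)/900) * E1_0_3_0 + ((21:ℂ)/20) * E1_1_0_2 + ((7:ℂ)/10) * E1_1_1_1 + ((-1:ℂ)/20) * E1_1_2_0 + ((3:ℂ)/4) * hpin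
  have z1_0_2_0 : d1 0 2 0 = 0 := by
    linear_combination ((824:ℂ)/3375) * E0_0_0_3 + ((3803:ℂ)/1125) * E0_0_1_2 + ((-1843:ℂ)/2250) * E0_0_2_1 + ((196:ℂ)/75) * E0_1_0_2 + ((49:ℂ)/75) * E0_1_1_1 + ((-97:ℂ)/150) * E0_1_2_0 + ((-7:ℂ)/10) * E0_2_0_1 + ((1:ℂ)/10) * E0_2_1_0 + ((-721:ℂ)/1350) * E1_0_0_3 + ((-196:ℂ)/225) * E1_0_1_2 + ((-49:ℂ)/450) * E1_0_2_1 + ((97:ℂ)/1350) * E1_0_3_0 + ((7:ℂ)/10) * E1_1_0_2 + ((7:ℂ)/15) * E1_1_1_1 + ((-1:ℂ)/30) * E1_1_2_0 + ((1:ℂ)/2) * hpin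
  have z1_1_0_1 : d1 1 0 1 = 0 := by
    linear_combination ((-1:ℂ)/90) * E1_0_0_3 + ((-1:ℂ)/6) * E1_1_0_2
  have z1_1_1_0 : d1 1 1 0 = 0 := by
    linear_combination ((532:ℂ)/1125) * E0_0_0_3 + ((-6251:ℂ)/2250) * E0_0_1_2 + ((931:ℂ)/4500) * E0_0_2_1 + ((-266:ℂ)/75) * E0_1_0_2 + ((-133:ℂ)/150) * E0_1_1_1 + ((49:ℂ)/300) * E0_1_2_0 + ((19:ℂ)/20) * E0_2_0_1 + ((-7:ℂ)/20) * E0_2_1_0 + ((1957:ℂ)/2700) * E1_0_0_3 + ((266:ℂ)/225) * E1_0_1_2 + ((133:ℂ)/900) * E1_0_2_1 + ((-49:ℂ)/2700) * E1_0_3_0 + ((-19:ℂ)/20) * E1_1_0_2 + ((-19:ℂ)/30) * E1_1_1_1 + ((7:ℂ)/60) * E1_1_2_0 + ((-1:ℂ)/4) * hpin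
  have z1_2_0_0 : d1 2 0 0 = 0 := by
    linear_combination ((-1:ℂ)/15) * E1_0_0_3 + (-1:ℂ) * E1_1_0_2 + (-1:ℂ) * E1_2_0_1
  have z2_0_0_2 : d2 0 0 2 = 0 := by
    linear_combination ((652:ℂ)/1125) * E0_0_0_3 + ((-893:ℂ)/1125) * E0_0_1_2 + ((133:ℂ)/2250) * E0_0_2_1 + ((-151:ℂ)/75) * E0_1_0_2 + ((-19:ℂ)/75) * E0_1_1_1 + ((7:ℂ)/150) * E0_1_2_0 + ((7:ℂ)/10) * E0_2_0_1 + ((-1:ℂ)/10) * E0_2_1_0 + ((421:ℂ)/1350) * E1_0_0_3 + ((76:ℂ)/225) * E1_0_1_2 + ((19:ℂ)/450) * E1_0_2_1 + ((-7:ℂ)/1350) * E1_0_3_0 + ((-7:ℂ)/10) * E1_1_0_2 + ((-7:ℂ)/15) * E1_1_1_1 + ((1:ℂ)/30) * E1_1_2_0 + ((-1:ℂ)/2) * hpin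
  have z2_0_1_1 : d2 0 1 1 = 0 := by
    linear_combination ((-473:ℂ)/1125) * E0_0_0_3 + ((994:ℂ)/375) * E0_0_1_2 + ((-703:ℂ)/1500) * E0_0_2_1 + ((83:ℂ)/25) * E0_1_0_2 + ((29:ℂ)/50) * E0_1_1_1 + ((-37:ℂ)/100) * E0_1_2_0 + ((-21:ℂ)/20) * E0_2_0_1 + ((3:ℂ)/20) * E0_2_1_0 + ((-601:ℂ)/900) * E1_0_0_3 + ((-83:ℂ)/75) * E1_0_1_2 + ((-79:ℂ)/300) * E1_0_2_1 + ((37:ℂ)/900) * E1_0_3_0 + ((21:ℂ)/20) * E1_1_0_2 + ((7:ℂ)/10) * E1_1_1_1 + ((-1:ℂ)/20) * E1_1_2_0 + ((3:ℂ)/4) * hpin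
  have z2_0_2_0 : d2 0 2 0 = 0 := by
    linear_combination ((-8:ℂ)/135) * E0_0_0_3 + ((-2:ℂ)/15) * E0_0_1_2 + ((1:ℂ)/15) * E0_0_2_1 + ((-1:ℂ)/9) * E1_0_3_0
  have z2_1_0_1 : d2 1 0 1 = 0 := by
    linear_combination ((152:ℂ)/1125) * E0_0_0_3 + ((-893:ℂ)/1125) * E0_0_1_2 + ((133:ℂ)/2250) * E0_0_2_1 + ((-76:ℂ)/75) * E0_1_0_2 + ((-19:ℂ)/75) * E0_1_1_1 + ((7:ℂ)/150) * E0_1_2_0 + ((1:ℂ)/5) * E0_2_0_1 + ((-1:ℂ)/10) * E0_2_1_0 + ((271:ℂ)/1350) * E1_0_0_3 + ((76:ℂ)/225) * E1_0_1_2 + ((19:ℂ)/450) * E1_0_2_1 + ((-7:ℂ)/1350) * E1_0_3_0 + ((-11:ℂ)/30) * E1_1_0_2 + ((-7:ℂ)/15) * E1_1_1_1 + ((1:ℂ)/30) * E1_1_2_0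
  have z2_1_1_0 : d2 1 1 0 = 0 := by
    linear_combination ((4:ℂ)/375) * E0_0_0_3 + ((-883:ℂ)/1125) * E0_0_1_2 + ((323:ℂ)/2250) * E0_0_2_1 + ((-56:ℂ)/75) * E0_1_0_2 + ((-14:ℂ)/75) * E0_1_1_1 + ((17:ℂ)/150) * E0_1_2_0 + ((1:ℂ)/5) * E0_2_0_1 + ((-1:ℂ)/10) * E0_2_1_0 + ((103:ℂ)/675) * E1_0_0_3 + ((56:ℂ)/225) * E1_0_1_2 + ((7:ℂ)/225) * E1_0_2_1 + ((-17:ℂ)/1350) * E1_0_3_0 + ((-1:ℂ)/5) * E1_1_0_2 + ((-2:ℂ)/15) * E1_1_1_1 + ((-2:ℂ)/15) * E1_1_2_0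
  have z2_2_0_0 : d2 2 0 0 = 0 := by
    linear_combination ((-1:ℂ)/3) * E0_3_0_0 + ((2:ℂ)/15) * E1_0_0_3 + (2:ℂ) * E1_1_0_2 + (2:ℂ) * E1_2_0_1
  have E0_0_0_4 : (-16:ℂ) * d0 0 0 3 = 0 := by
    have h := hE0 0 0 4
    simp only [Nat.reduceSub] at h
    linear_combination h
  have E0_0_2_2 : (10:ℂ) * d0 0 1 2 + (8:ℂ) * d0 0 2 1 = 0 := by
    have h := hE0 0 2 2
    simp only [Nat.reduceSub] at h
    linear_combination h
  have E0_0_3_1 : (9:ℂ) * d0 0 2 1 + (8:ℂ) * d0 0 3 0 = 0 := by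
    have h := hE0 0 3 1
    simp only [Nat.reduceSub] at h
    linear_combination h
  have E0_0_4_0 : (4:ℂ) * d0 0 3 0 = 0 := by
    have h := hE0 0 4 0
    simp only [Nat.reduceSub] at h
    linear_combination h
  have E0_1_0_3 : (-4:ℂ) * d0 0 0 3 + (-6:ℂ) * d0 1 0 2 + (-2:ℂ) * d1 0 0 3 + (-1:ℂ) * d2 0 0 3 = 0 := by
    have h := hE0 1 0 3
    simp only [Nat.reduceSub] at h
    linear_combination h
  have E0_1_1_2 : (-5:ℂ) * d0 0 1 2 + (6:ℂ) * d0 1 0 2 + (4:ℂ) * d0 1 1 1 + (-2:ℂ) * d1 0 1 2 + (-1:ℂ) * d2 0 1 2 = 0 := by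
    have h := hE0 1 1 2
    simp only [Nat.reduceSub] at h
    linear_combination h
  have E0_1_2_1 : (-6:ℂ) * d0 0 2 1 + (8:ℂ) * d0 1 1 1 + (6:ℂ) * d0 1 2 0 + (-2:ℂ) * d1 0 2 1 + (-1:ℂ) * d2 0 2 1 = 0 := by
    have h := hE0 1 2 1
    simp only [Nat.reduceSub] at h
    linear_combination h
  have E0_1_3_0 : (-7:ℂ) * d0 0 3 0 + (6:ℂ) * d0 1 2 0 + (-2:ℂ) * d1 0 3 0 + (-1:ℂ) * d2 0 3 0 = 0 := by
    have h := hE0 1 3 0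
    simp only [Nat.reduceSub] at h
    linear_combination h
  have E0_2_0_2 : (-4:ℂ) * d0 1 0 2 + (-4:ℂ) * d1 1 0 2 + (-2:ℂ) * d2 1 0 2 = 0 := by
    have h := hE0 2 0 2
    simp only [Nat.reduceSub] at h
    linear_combination h
  have E0_2_1_1 : (-6:ℂ) * d0 1 1 1 + (5:ℂ) * d0 2 0 1 + (4:ℂ) * d0 2 1 0 + (-4:ℂ) * d1 1 1 1 + (-2:ℂ) * d2 1 1 1 = 0 := by
    have h := hE0 2 1 1
    simp only [Nat.reduceSub] at h
    linear_combination h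
  have E0_2_2_0 : (-8:ℂ) * d0 1 2 0 + (6:ℂ) * d0 2 1 0 + (-4:ℂ) * d1 1 2 0 + (-2:ℂ) * d2 1 2 0 = 0 := by
    have h := hE0 2 2 0
    simp only [Nat.reduceSub] at h
    linear_combination h
  have E0_3_0_1 : (2:ℂ) * d0 3 0 0 + (-6:ℂ) * d1 2 0 1 + (-3:ℂ) * d2 2 0 1 = 0 := by
    have h := hE0 3 0 1
    simp only [Nat.reduceSub] at h
    linear_combination h
  have E0_3_1_0 : (-3:ℂ) * d0 2 1 0 + (4:ℂ) * d0 3 0 0 + (-6:ℂ) * d1 2 1 0 + (-3:ℂ) * d2 2 1 0 = 0 := by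
    have h := hE0 3 1 0
    simp only [Nat.reduceSub] at h
    linear_combination h
  have E0_4_0_0 : (8:ℂ) * d0 3 0 0 + (-8:ℂ) * d1 3 0 0 + (-4:ℂ) * d2 3 0 0 = 0 := by
    have h := hE0 4 0 0
    simp only [Nat.reduceSub] at h
    linear_combination h
  have E1_0_0_4 : (-24:ℂ) * d1 0 0 3 = 0 := by
    have h := hE1 0 0 4
    simp only [Nat.reduceSub] at h
    linear_combination h
  have E1_0_1_3 : (7:ℂ) * d1 0 0 3 + (-6:ℂ) * d1 0 1 2 + (1:ℂ) * d0 0 0 3 + (-3:ℂ) * d2 0 0 3 = 0 := by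
    have h := hE1 0 1 3
    simp only [Nat.reduceSub] at h
    linear_combination h
  have E1_0_2_2 : (10:ℂ) * d1 0 1 2 + (4:ℂ) * d1 0 2 1 + (2:ℂ) * d0 0 1 2 + (-6:ℂ) * d2 0 1 2 = 0 := by
    have h := hE1 0 2 2
    simp only [Nat.reduceSub] at h
    linear_combination h
  have E1_0_3_1 : (9:ℂ) * d1 0 2 1 + (6:ℂ) * d1 0 3 0 + (3:ℂ) * d0 0 2 1 + (-9:ℂ) * d2 0 2 1 = 0 := by
    have h := hE1 0 3 1
    simp only [Nat.reduceSub] at h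
    linear_combination h
  have E1_0_4_0 : (4:ℂ) * d1 0 3 0 + (4:ℂ) * d0 0 3 0 + (-12:ℂ) * d2 0 3 0 = 0 := by
    have h := hE1 0 4 0
    simp only [Nat.reduceSub] at h
    linear_combination h
  have E1_1_0_3 : (1:ℂ) * d1 0 0 3 + (-12:ℂ) * d1 1 0 2 = 0 := by
    have h := hE1 1 0 3
    simp only [Nat.reduceSub] at h
    linear_combination h
  have E1_1_1_2 : (6:ℂ) * d1 1 0 2 + (1:ℂ) * d0 1 0 2 + (-3:ℂ) * d2 1 0 2 = 0 := by
    have h := hE1 1 1 2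
    simp only [Nat.reduceSub] at h
    linear_combination h
  have E1_1_2_1 : (-1:ℂ) * d1 0 2 1 + (8:ℂ) * d1 1 1 1 + (4:ℂ) * d1 1 2 0 + (2:ℂ) * d0 1 1 1 + (-6:ℂ) * d2 1 1 1 = 0 := by
    have h := hE1 1 2 1
    simp only [Nat.reduceSub] at h
    linear_combination h
  have E1_1_3_0 : (-2:ℂ) * d1 0 3 0 + (6:ℂ) * d1 1 2 0 + (3:ℂ) * d0 1 2 0 + (-9:ℂ) * d2 1 2 0 = 0 := by
    have h := hE1 1 3 0
    simp only [Nat.reduceSub] at h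
    linear_combination h
  have E1_2_0_2 : (6:ℂ) * d1 1 0 2 + (-4:ℂ) * d1 2 0 1 = 0 := by
    have h := hE1 2 0 2
    simp only [Nat.reduceSub] at h
    linear_combination h
  have E1_2_1_1 : (4:ℂ) * d1 1 1 1 + (5:ℂ) * d1 2 0 1 + (2:ℂ) * d1 2 1 0 + (1:ℂ) * d0 2 0 1 + (-3:ℂ) * d2 2 0 1 = 0 := by
    have h := hE1 2 1 1
    simp only [Nat.reduceSub] at h
    linear_combination h
  have E1_2_2_0 : (2:ℂ) * d1 1 2 0 + (6:ℂ) * d1 2 1 0 + (2:ℂ) * d0 2 1 0 + (-6:ℂ) * d2 2 1 0 = 0 := by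
    have h := hE1 2 2 0
    simp only [Nat.reduceSub] at h
    linear_combination h
  have E1_3_1_0 : (12:ℂ) * d1 2 1 0 + (4:ℂ) * d1 3 0 0 + (1:ℂ) * d0 3 0 0 + (-3:ℂ) * d2 3 0 0 = 0 := by
    have h := hE1 3 1 0
    simp only [Nat.reduceSub] at h
    linear_combination h
  have E1_4_0_0 : (28:ℂ) * d1 3 0 0 = 0 := by
    have h := hE1 4 0 0
    simp only [Nat.reduceSub] at h
    linear_combination h
  have E2_0_1_3 : (6:ℂ) * d2 0 0 3 + (9:ℂ) * d2 0 1 2 + (-9:ℂ) * d1 0 1 2 = 0 := by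
    have h := hE2 0 1 3
    simp only [Nat.reduceSub] at h
    linear_combination h
  have E2_1_1_2 : (-1:ℂ) * d2 0 1 2 + (5:ℂ) * d2 1 0 2 + (10:ℂ) * d2 1 1 1 + (-6:ℂ) * d1 1 1 1 = 0 := by
    have h := hE2 1 1 2
    simp only [Nat.reduceSub] at h
    linear_combination h
  have z0_0_0_3 : d0 0 0 3 = 0 := by
    linear_combination ((-1:ℂ)/16) * E0_0_0_4
  have z0_0_1_2 : d0 0 1 2 = 0 := by
    linear_combination ((1:ℂ)/10) * E0_0_2_2 + ((-4:ℂ)/45) * E0_0_3_1 + ((8:ℂ)/45) * E0_0_4_0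
  have z0_0_2_1 : d0 0 2 1 = 0 := by
    linear_combination ((1:ℂ)/9) * E0_0_3_1 + ((-2:ℂ)/9) * E0_0_4_0
  have z0_0_3_0 : d0 0 3 0 = 0 := by
    linear_combination ((1:ℂ)/4) * E0_0_4_0
  have z0_1_0_2 : d0 1 0 2 = 0 := by
    linear_combination ((-3:ℂ)/14) * E0_2_0_2 + ((1:ℂ)/168) * E1_0_0_4 + ((1:ℂ)/7) * E1_1_0_3 + ((1:ℂ)/7) * E1_1_1_2
  have z0_1_1_1 : d0 1 1 1 = 0 := by
    linear_combination ((-55:ℂ)/384) * E0_0_0_4 + ((1:ℂ)/8) * E0_0_2_2 + ((-1:ℂ)/9) * E0_0_3_1 + ((2:ℂ)/9) * E0_0_4_0 + ((13:ℂ)/24) * E0_1_0_3 + ((1:ℂ)/4) * E0_1_1_2 + ((-3:ℂ)/8) * E0_2_0_2 + ((-41:ℂ)/576) * E1_0_0_4 + ((-1:ℂ)/8) * E1_0_1_3 + ((1:ℂ)/4) * E1_1_0_3 + ((1:ℂ)/4) * E1_1_1_2 + ((1:ℂ)/36) * E2_0_1_3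
  have z0_1_2_0 : d0 1 2 0 = 0 := by
    linear_combination ((539:ℂ)/2880) * E0_0_0_4 + ((-161:ℂ)/600) * E0_0_2_2 + ((1631:ℂ)/4050) * E0_0_3_1 + ((-3757:ℂ)/4050) * E0_0_4_0 + ((-119:ℂ)/180) * E0_1_0_3 + ((-7:ℂ)/15) * E0_1_1_2 + ((7:ℂ)/30) * E0_1_2_1 + ((-1:ℂ)/15) * E0_1_3_0 + ((1:ℂ)/4) * E0_2_0_2 + ((649:ℂ)/4320) * E1_0_0_4 + ((7:ℂ)/20) * E1_0_1_3 + ((7:ℂ)/40) * E1_0_2_2 + ((-7:ℂ)/270) * E1_0_3_1 + ((1:ℂ)/180) * E1_0_4_0 + ((-1:ℂ)/6) * E1_1_0_3 + ((-1:ℂ)/6) * E1_1_1_2 + ((7:ℂ)/108) * E2_0_1_3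
  have z0_2_0_1 : d0 2 0 1 = 0 := by
    linear_combination ((-2178883:ℂ)/28389600) * E0_0_0_4 + ((-285683:ℂ)/5914500) * E0_0_2_2 + ((5121368:ℂ)/39922875) * E0_0_3_1 + ((-11815846:ℂ)/39922875) * E0_0_4_0 + ((583423:ℂ)/1774350) * E0_1_0_3 + ((-12932:ℂ)/295725) * E0_1_1_2 + ((35866:ℂ)/295725) * E0_1_2_1 + ((-6356:ℂ)/295725) * E0_1_3_0 + ((-118753:ℂ)/276010) * E0_2_0_2 + ((3697:ℂ)/19715) * E0_2_1_1 + ((1362:ℂ)/19715) * E0_2_2_0 + ((-246:ℂ)/3943) * E0_3_0_1 + ((1148:ℂ)/3943) * E0_3_1_0 + ((-615:ℂ)/3943) * E0_4_0_0 + ((10916093:ℂ)/596181600) * E1_0_0_4 + ((17201:ℂ)/197150) * E1_0_1_3 + ((52121:ℂ)/394300) * E1_0_2_2 + ((-35866:ℂ)/2661525) * E1_0_3_1 + ((1589:ℂ)/887175) * E1_0_4_0 + ((268459:ℂ)/552020) * E1_1_0_3 + ((212903:ℂ)/414015) * E1_1_1_2 + ((3251:ℂ)/19715) * E1_1_2_1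 + ((-908:ℂ)/59145) * E1_1_3_0 + ((1353:ℂ)/7886) * E1_2_0_2 + ((246:ℂ)/3943) * E1_2_1_1 + ((-574:ℂ)/3943) * E1_2_2_0 + ((820:ℂ)/3943) * E1_3_1_0 + ((-2050:ℂ)/27601) * E1_4_0_0 + ((20957:ℂ)/212922) * E2_0_1_3 + ((538:ℂ)/3943) * E2_1_1_2
  have z0_2_1_0 : d0 2 1 0 = 0 := by
    linear_combination ((4271249:ℂ)/56779200) * E0_0_0_4 + ((-1463051:ℂ)/11829000) * E0_0_2_2 + ((14504621:ℂ)/79845750) * E0_0_3_1 + ((-31653037:ℂ)/79845750) * E0_0_4_0 + ((-926069:ℂ)/3548700) * E0_1_0_3 + ((-62977:ℂ)/295725) * E0_1_1_2 + ((60277:ℂ)/591450) * E0_1_2_1 + ((-5341:ℂ)/295725) * E0_1_3_0 + ((38869:ℂ)/552020) * E0_2_0_2 + ((132:ℂ)/19715) * E0_2_1_1 + ((2289:ℂ)/39430) * E0_2_2_0 + ((132:ℂ)/3943) * E0_3_0_1 + ((-616:ℂ)/3943) * E0_3_1_0 + ((330:ℂ)/3943) * E0_4_0_0 + ((38941123:ℂ)/596181600)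 * E1_0_0_4 + ((62997:ℂ)/394300) * E1_0_1_3 + ((67837:ℂ)/788600) * E1_0_2_2 + ((-60277:ℂ)/5323050) * E1_0_3_1 + ((5341:ℂ)/3548700) * E1_0_4_0 + ((-30092:ℂ)/414015) * E1_1_0_3 + ((-5269:ℂ)/828030) * E1_1_1_2 + ((756:ℂ)/19715) * E1_1_2_1 + ((-763:ℂ)/59145) * E1_1_3_0 + ((-363:ℂ)/3943) * E1_2_0_2 + ((-132:ℂ)/3943) * E1_2_1_1 + ((308:ℂ)/3943) * E1_2_2_0 + ((-440:ℂ)/3943) * E1_3_1_0 + ((1100:ℂ)/27601) * E1_4_0_0 + ((15497:ℂ)/425844) * E2_0_1_3 + ((96:ℂ)/3943) * E2_1_1_2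
  have z0_3_0_0 : d0 3 0 0 = 0 := by
    linear_combination ((1149893:ℂ)/2365800) * E0_0_0_4 + ((-1006789:ℂ)/985750) * E0_0_2_2 + ((19316288:ℂ)/13307625) * E0_0_3_1 + ((-41972836:ℂ)/13307625) * E0_0_4_0 + ((-478816:ℂ)/295725) * E0_1_0_3 + ((-170762:ℂ)/98575) * E0_1_1_2 + ((76156:ℂ)/98575) * E0_1_2_1 + ((-13496:ℂ)/98575) * E0_1_3_0 + ((4518:ℂ)/138005) * E0_2_0_2 + ((2706:ℂ)/19715) * E0_2_1_1 + ((8676:ℂ)/19715) * E0_2_2_0 + ((2706:ℂ)/3943) * E0_3_0_1 + ((3144:ℂ)/3943) * E0_3_1_0 + ((-8427:ℂ)/15772) * E0_4_0_0 + ((97629713:ℂ)/198727200) * E1_0_0_4 + ((128174:ℂ)/98575) * E1_0_1_3 + ((152979:ℂ)/197150) * E1_0_2_2 + ((-76156:ℂ)/887175) * E1_0_3_1 + ((3374:ℂ)/295725) * E1_0_4_0 + ((-303353:ℂ)/552020) * E1_1_0_3 + ((111788:ℂ)/138005) * E1_1_1_2 + ((15498:ℂ)/19715) * E1_1_2_1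 + ((-1928:ℂ)/19715) * E1_1_3_0 + ((-14883:ℂ)/7886) * E1_2_0_2 + ((-2706:ℂ)/3943) * E1_2_1_1 + ((-1572:ℂ)/3943) * E1_2_2_0 + ((2809:ℂ)/3943) * E1_3_1_0 + ((-14045:ℂ)/55202) * E1_4_0_0 + ((13495:ℂ)/35487) * E2_0_1_3 + ((1968:ℂ)/3943) * E2_1_1_2
  have z1_0_0_3 : d1 0 0 3 = 0 := by
    linear_combination ((-1:ℂ)/24) * E1_0_0_4
  have z1_0_1_2 : d1 0 1 2 = 0 := by
    linear_combination ((-13:ℂ)/96) * E0_0_0_4 + ((1:ℂ)/2) * E0_1_0_3 + ((-9:ℂ)/14) * E0_2_0_2 + ((-73:ℂ)/1008) * E1_0_0_4 + ((-1:ℂ)/6) * E1_0_1_3 + ((3:ℂ)/7) * E1_1_0_3 + ((3:ℂ)/7) * E1_1_1_2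
  have z1_0_2_1 : d1 0 2 1 = 0 := by
    linear_combination ((-11:ℂ)/96) * E0_0_0_4 + ((-1:ℂ)/20) * E0_0_2_2 + ((2:ℂ)/45) * E0_0_3_1 + ((-4:ℂ)/45) * E0_0_4_0 + ((1:ℂ)/2) * E0_1_0_3 + ((-9:ℂ)/14) * E0_2_0_2 + ((25:ℂ)/1008) * E1_0_0_4 + ((1:ℂ)/6) * E1_0_1_3 + ((1:ℂ)/4) * E1_0_2_2 + ((3:ℂ)/7) * E1_1_0_3 + ((3:ℂ)/7) * E1_1_1_2 + ((1:ℂ)/6) * E2_0_1_3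
  have z1_0_3_0 : d1 0 3 0 = 0 := by
    linear_combination ((77:ℂ)/160) * E0_0_0_4 + ((-69:ℂ)/100) * E0_0_2_2 + ((233:ℂ)/225) * E0_0_3_1 + ((-1427:ℂ)/450) * E0_0_4_0 + ((-17:ℂ)/10) * E0_1_0_3 + ((-6:ℂ)/5) * E0_1_1_2 + ((3:ℂ)/5) * E0_1_2_1 + ((-3:ℂ)/5) * E0_1_3_0 + ((9:ℂ)/14) * E0_2_0_2 + ((649:ℂ)/1680) * E1_0_0_4 + ((9:ℂ)/10) * E1_0_1_3 + ((9:ℂ)/20) * E1_0_2_2 + ((-1:ℂ)/15) * E1_0_3_1 + ((1:ℂ)/20) * E1_0_4_0 + ((-3:ℂ)/7) * E1_1_0_3 + ((-3:ℂ)/7) * E1_1_1_2 + ((1:ℂ)/6) * E2_0_1_3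
  have z1_1_0_2 : d1 1 0 2 = 0 := by
    linear_combination ((-1:ℂ)/288) * E1_0_0_4 + ((-1:ℂ)/12) * E1_1_0_3
  have z1_1_1_1 : d1 1 1 1 = 0 := by
    linear_combination ((3655477:ℂ)/22711680) * E0_0_0_4 + ((-84523:ℂ)/295725) * E0_0_2_2 + ((3124282:ℂ)/7984575) * E0_0_3_1 + ((-6754454:ℂ)/7984575) * E0_0_4_0 + ((-787027:ℂ)/1419480) * E0_1_0_3 + ((-116947:ℂ)/236580) * E0_1_1_2 + ((11534:ℂ)/59145) * E0_1_2_1 + ((-2044:ℂ)/59145) * E0_1_3_0 + ((25859:ℂ)/220808) * E0_2_0_2 + ((-27:ℂ)/3943) * E0_2_1_1 + ((438:ℂ)/3943) * E0_2_2_0 + ((-135:ℂ)/3943) * E0_3_0_1 + ((630:ℂ)/3943) * E0_3_1_0 + ((-675:ℂ)/7886) * E0_4_0_0 + ((18247207:ℂ)/119236320) * E1_0_0_4 + ((169123:ℂ)/473160) * E1_0_1_3 + ((30483:ℂ)/157720) * E1_0_2_2 + ((-11534:ℂ)/532305) * E1_0_3_1 + ((511:ℂ)/177435) * E1_0_4_0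 + ((40997:ℂ)/662424) * E1_1_0_3 + ((35671:ℂ)/331212) * E1_1_1_2 + ((1483:ℂ)/7886) * E1_1_2_1 + ((-292:ℂ)/11829) * E1_1_3_0 + ((1485:ℂ)/15772) * E1_2_0_2 + ((135:ℂ)/3943) * E1_2_1_1 + ((-315:ℂ)/3943) * E1_2_2_0 + ((450:ℂ)/3943) * E1_3_1_0 + ((-1125:ℂ)/27601) * E1_4_0_0 + ((18377:ℂ)/212922) * E2_0_1_3 + ((879:ℂ)/7886) * E2_1_1_2
  have z1_1_2_0 : d1 1 2 0 = 0 := by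
    linear_combination ((-5092819:ℂ)/28389600) * E0_0_0_4 + ((2831837:ℂ)/11829000) * E0_0_2_2 + ((-14522026:ℂ)/39922875) * E0_0_3_1 + ((31826447:ℂ)/39922875) * E0_0_4_0 + ((566957:ℂ)/887175) * E0_1_0_3 + ((247673:ℂ)/591450) * E0_1_1_2 + ((-63437:ℂ)/295725) * E0_1_2_1 + ((11242:ℂ)/295725) * E0_1_3_0 + ((-75479:ℂ)/276010) * E0_2_0_2 + ((297:ℂ)/39430) * E0_2_1_1 + ((-2409:ℂ)/19715) * E0_2_2_0 + ((297:ℂ)/7886) * E0_3_0_1 + ((-693:ℂ)/3943) * E0_3_1_0 + ((1485:ℂ)/15772) * E0_4_0_0 + ((-330168829:ℂ)/2384726400) * E1_0_0_4 + ((-61907:ℂ)/197150) * E1_0_1_3 + ((-118369:ℂ)/788600) * E1_0_2_2 + ((63437:ℂ)/2661525) * E1_0_3_1 + ((-5621:ℂ)/1774350) * E1_0_4_0 + ((1015829:ℂ)/6624240) * E1_1_0_3 + ((94379:ℂ)/414015) * E1_1_1_2 + ((1701:ℂ)/39430) * E1_1_2_1 + ((1606:ℂ)/59145) * E1_1_3_0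 + ((-3267:ℂ)/31544) * E1_2_0_2 + ((-297:ℂ)/7886) * E1_2_1_1 + ((693:ℂ)/7886) * E1_2_2_0 + ((-495:ℂ)/3943) * E1_3_1_0 + ((2475:ℂ)/55202) * E1_4_0_0 + ((-21503:ℂ)/425844) * E2_0_1_3 + ((108:ℂ)/3943) * E2_1_1_2
  have z1_2_0_1 : d1 2 0 1 = 0 := by
    linear_combination ((-1:ℂ)/192) * E1_0_0_4 + ((-1:ℂ)/8) * E1_1_0_3 + ((-1:ℂ)/4) * E1_2_0_2
  have z1_2_1_0 : d1 2 1 0 = 0 := by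
    linear_combination ((1149893:ℂ)/5677920) * E0_0_0_4 + ((-1006789:ℂ)/2365800) * E0_0_2_2 + ((4829072:ℂ)/7984575) * E0_0_3_1 + ((-10493209:ℂ)/7984575) * E0_0_4_0 + ((-119704:ℂ)/177435) * E0_1_0_3 + ((-85381:ℂ)/118290) * E0_1_1_2 + ((19039:ℂ)/59145) * E0_1_2_1 + ((-3374:ℂ)/59145) * E0_1_3_0 + ((753:ℂ)/55202) * E0_2_0_2 + ((451:ℂ)/7886) * E0_2_1_1 + ((723:ℂ)/3943) * E0_2_2_0 + ((2255:ℂ)/7886) * E0_3_0_1 + ((1310:ℂ)/3943) * E0_3_1_0 + ((-4497:ℂ)/15772) * E0_4_0_0 + ((97629713:ℂ)/476945280) * E1_0_0_4 + ((64087:ℂ)/118290) * E1_0_1_3 + ((50993:ℂ)/157720) * E1_0_2_2 + ((-19039:ℂ)/532305) * E1_0_3_1 + ((1687:ℂ)/354870) * E1_0_4_0 + ((-303353:ℂ)/1324848) * E1_1_0_3 + ((27947:ℂ)/82803) * E1_1_1_2 + ((2583:ℂ)/7886) * E1_1_2_1 + ((-482:ℂ)/11829) * E1_1_3_0 + ((-24805:ℂ)/31544)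 * E1_2_0_2 + ((-2255:ℂ)/7886) * E1_2_1_1 + ((-655:ℂ)/3943) * E1_2_2_0 + ((1499:ℂ)/3943) * E1_3_1_0 + ((-7495:ℂ)/55202) * E1_4_0_0 + ((67475:ℂ)/425844) * E2_0_1_3 + ((820:ℂ)/3943) * E2_1_1_2
  have z1_3_0_0 : d1 3 0 0 = 0 := by
    linear_combination ((1:ℂ)/28) * E1_4_0_0
  have z2_0_0_3 : d2 0 0 3 = 0 := by
    linear_combination ((1:ℂ)/4) * E0_0_0_4 + (-1:ℂ) * E0_1_0_3 + ((9:ℂ)/7) * E0_2_0_2 + ((1:ℂ)/21) * E1_0_0_4 + ((-6:ℂ)/7) * E1_1_0_3 + ((-6:ℂ)/7) * E1_1_1_2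
  have z2_0_1_2 : d2 0 1 2 = 0 := by
    linear_combination ((-29:ℂ)/96) * E0_0_0_4 + ((7:ℂ)/6) * E0_1_0_3 + ((-3:ℂ)/2) * E0_2_0_2 + ((-5:ℂ)/48) * E1_0_0_4 + ((-1:ℂ)/6) * E1_0_1_3 + (1:ℂ) * E1_1_0_3 + (1:ℂ) * E1_1_1_2 + ((1:ℂ)/9) * E2_0_1_3
  have z2_0_2_1 : d2 0 2 1 = 0 := by
    linear_combination ((33:ℂ)/160) * E0_0_0_4 + ((-51:ℂ)/100) * E0_0_2_2 + ((521:ℂ)/675) * E0_0_3_1 + ((-1537:ℂ)/675) * E0_0_4_0 + ((-19:ℂ)/30) * E0_1_0_3 + ((-4:ℂ)/5) * E0_1_1_2 + ((2:ℂ)/5) * E0_1_2_1 + ((-2:ℂ)/5) * E0_1_3_0 + ((-3:ℂ)/14) * E0_2_0_2 + ((1423:ℂ)/5040) * E1_0_0_4 + ((23:ℂ)/30) * E1_0_1_3 + ((11:ℂ)/20) * E1_0_2_2 + ((-7:ℂ)/45) * E1_0_3_1 + ((1:ℂ)/30) * E1_0_4_0 + ((1:ℂ)/7) * E1_1_0_3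 + ((1:ℂ)/7) * E1_1_1_2 + ((5:ℂ)/18) * E2_0_1_3
  have z2_0_3_0 : d2 0 3 0 = 0 := by
    linear_combination ((77:ℂ)/480) * E0_0_0_4 + ((-23:ℂ)/100) * E0_0_2_2 + ((233:ℂ)/675) * E0_0_3_1 + ((-2629:ℂ)/2700) * E0_0_4_0 + ((-17:ℂ)/30) * E0_1_0_3 + ((-2:ℂ)/5) * E0_1_1_2 + ((1:ℂ)/5) * E0_1_2_1 + ((-1:ℂ)/5) * E0_1_3_0 + ((3:ℂ)/14) * E0_2_0_2 + ((649:ℂ)/5040) * E1_0_0_4 + ((3:ℂ)/10) * E1_0_1_3 + ((3:ℂ)/20) * E1_0_2_2 + ((-1:ℂ)/45) * E1_0_3_1 + ((-1:ℂ)/15) * E1_0_4_0 + ((-1:ℂ)/7) * E1_1_0_3 + ((-1:ℂ)/7) * E1_1_1_2 + ((1:ℂ)/18) * E2_0_1_3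
  have z2_1_0_2 : d2 1 0 2 = 0 := by
    linear_combination ((-1:ℂ)/14) * E0_2_0_2 + ((-5:ℂ)/1008) * E1_0_0_4 + ((-5:ℂ)/42) * E1_1_0_3 + ((-2:ℂ)/7) * E1_1_1_2
  have z2_1_1_1 : d2 1 1 1 = 0 := by
    linear_combination ((2512007:ℂ)/37852800) * E0_0_0_4 + ((-84523:ℂ)/492875) * E0_0_2_2 + ((3124282:ℂ)/13307625) * E0_0_3_1 + ((-6754454:ℂ)/13307625) * E0_0_4_0 + ((-170339:ℂ)/788600) * E0_1_0_3 + ((-116947:ℂ)/394300) * E0_1_1_2 + ((11534:ℂ)/98575) * E0_1_2_1 + ((-2044:ℂ)/98575) * E0_1_3_0 + ((-48599:ℂ)/1104040) * E0_2_0_2 + ((-81:ℂ)/19715) * E0_2_1_1 + ((1314:ℂ)/19715) * E0_2_2_0 + ((-81:ℂ)/3943) * E0_3_0_1 + ((378:ℂ)/3943) * E0_3_1_0 + ((-405:ℂ)/7886) * E0_4_0_0 + ((1852223:ℂ)/22080800) * E1_0_0_4 + ((467939:ℂ)/2365800) * E1_0_1_3 + ((91449:ℂ)/788600) * E1_0_2_2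 + ((-11534:ℂ)/887175) * E1_0_3_1 + ((511:ℂ)/295725) * E1_0_4_0 + ((651353:ℂ)/3312120) * E1_1_0_3 + ((169733:ℂ)/552020) * E1_1_1_2 + ((4449:ℂ)/39430) * E1_1_2_1 + ((-292:ℂ)/19715) * E1_1_3_0 + ((891:ℂ)/15772) * E1_2_0_2 + ((81:ℂ)/3943) * E1_2_1_1 + ((-189:ℂ)/3943) * E1_2_2_0 + ((270:ℂ)/3943) * E1_3_1_0 + ((-675:ℂ)/27601) * E1_4_0_0 + ((248:ℂ)/3943) * E2_0_1_3 + ((658:ℂ)/3943) * E2_1_1_2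
  have z2_1_2_0 : d2 1 2 0 = 0 := by
    linear_combination ((-1035613:ℂ)/6308800) * E0_0_0_4 + ((881211:ℂ)/3943000) * E0_0_2_2 + ((-3002077:ℂ)/8871750) * E0_0_3_1 + ((8223569:ℂ)/8871750) * E0_0_4_0 + ((230053:ℂ)/394300) * E0_1_0_3 + ((38472:ℂ)/98575) * E0_1_1_2 + ((-39147:ℂ)/197150) * E0_1_2_1 + ((13451:ℂ)/98575) * E0_1_3_0 + ((-19071:ℂ)/78860) * E0_2_0_2 + ((99:ℂ)/19715) * E0_2_1_1 + ((-1606:ℂ)/19715) * E0_2_2_0 + ((99:ℂ)/3943) * E0_3_0_1 + ((-462:ℂ)/3943) * E0_3_1_0 + ((495:ℂ)/7886) * E0_4_0_0 + ((-2423911:ℂ)/18926400) * E1_0_0_4 + ((-115401:ℂ)/394300) * E1_0_1_3 + ((-111771:ℂ)/788600) * E1_0_2_2 + ((13049:ℂ)/591450) * E1_0_3_1 + ((-13451:ℂ)/1182900) * E1_0_4_0 + ((22383:ℂ)/157720) * E1_1_0_3 + ((7557:ℂ)/39430) * E1_1_1_2 + ((567:ℂ)/19715) * E1_1_2_1 +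 ((-5501:ℂ)/59145) * E1_1_3_0 + ((-1089:ℂ)/15772) * E1_2_0_2 + ((-99:ℂ)/3943) * E1_2_1_1 + ((231:ℂ)/3943) * E1_2_2_0 + ((-330:ℂ)/3943) * E1_3_1_0 + ((825:ℂ)/27601) * E1_4_0_0 + ((-2323:ℂ)/47316) * E2_0_1_3 + ((72:ℂ)/3943) * E2_1_1_2
  have z2_2_0_1 : d2 2 0 1 = 0 := by
    linear_combination ((1149893:ℂ)/3548700) * E0_0_0_4 + ((-1006789:ℂ)/1478625) * E0_0_2_2 + ((38632576:ℂ)/39922875) * E0_0_3_1 + ((-83945672:ℂ)/39922875) * E0_0_4_0 + ((-957632:ℂ)/887175) * E0_1_0_3 + ((-341524:ℂ)/295725) * E0_1_1_2 + ((152312:ℂ)/295725) * E0_1_2_1 + ((-26992:ℂ)/295725) * E0_1_3_0 + ((3012:ℂ)/138005) * E0_2_0_2 + ((1804:ℂ)/19715) * E0_2_1_1 + ((5784:ℂ)/19715) * E0_2_2_0 + ((1469:ℂ)/11829) * E0_3_0_1 + ((2096:ℂ)/3943) * E0_3_1_0 + ((-2809:ℂ)/7886) * E0_4_0_0 + ((201469651:ℂ)/596181600)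 * E1_0_0_4 + ((256348:ℂ)/295725) * E1_0_1_3 + ((50993:ℂ)/98575) * E1_0_2_2 + ((-152312:ℂ)/2661525) * E1_0_3_1 + ((6748:ℂ)/887175) * E1_0_4_0 + ((-192691:ℂ)/1656060) * E1_1_0_3 + ((223576:ℂ)/414015) * E1_1_1_2 + ((10332:ℂ)/19715) * E1_1_2_1 + ((-3856:ℂ)/59145) * E1_1_3_0 + ((-5979:ℂ)/7886) * E1_2_0_2 + ((-1804:ℂ)/3943) * E1_2_1_1 + ((-1048:ℂ)/3943) * E1_2_2_0 + ((5618:ℂ)/11829) * E1_3_1_0 + ((-14045:ℂ)/82803) * E1_4_0_0 + ((26990:ℂ)/106461) * E2_0_1_3 + ((1312:ℂ)/3943) * E2_1_1_2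
  have z2_2_1_0 : d2 2 1 0 = 0 := by
    linear_combination ((9527467:ℂ)/56779200) * E0_0_0_4 + ((-4577683:ℂ)/11829000) * E0_0_2_2 + ((43444243:ℂ)/79845750) * E0_0_3_1 + ((-94265471:ℂ)/79845750) * E0_0_4_0 + ((-1946827:ℂ)/3548700) * E0_1_0_3 + ((-193166:ℂ)/295725) * E0_1_1_2 + ((168191:ℂ)/591450) * E0_1_2_1 + ((-14903:ℂ)/295725) * E0_1_3_0 + ((-29833:ℂ)/552020) * E0_2_0_2 + ((1221:ℂ)/19715) * E0_2_1_1 + ((6387:ℂ)/39430) * E0_2_2_0 + ((1221:ℂ)/3943) * E0_3_0_1 + ((2621:ℂ)/11829) * E0_3_1_0 + ((-1781:ℂ)/7886) * E0_4_0_0 + ((215006893:ℂ)/1192363200) * E1_0_0_4 + ((193351:ℂ)/394300) * E1_0_1_3 + ((238121:ℂ)/788600) * E1_0_2_2 + ((-168191:ℂ)/5323050) * E1_0_3_1 + ((14903:ℂ)/3548700) * E1_0_4_0 + ((-669323:ℂ)/3312120) * E1_1_0_3 + ((340633:ℂ)/828030) * E1_1_1_2 + ((6993:ℂ)/19715) *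 E1_1_2_1 + ((-2129:ℂ)/59145) * E1_1_3_0 + ((-13431:ℂ)/15772) * E1_2_0_2 + ((-1221:ℂ)/3943) * E1_2_1_1 + ((-1094:ℂ)/3943) * E1_2_2_0 + ((3562:ℂ)/11829) * E1_3_1_0 + ((-8905:ℂ)/82803) * E1_4_0_0 + ((65473:ℂ)/425844) * E2_0_1_3 + ((888:ℂ)/3943) * E2_1_1_2
  have z2_3_0_0 : d2 3 0 0 = 0 := by
    linear_combination ((1149893:ℂ)/1182900) * E0_0_0_4 + ((-1006789:ℂ)/492875) * E0_0_2_2 + ((38632576:ℂ)/13307625) * E0_0_3_1 + ((-83945672:ℂ)/13307625) * E0_0_4_0 + ((-957632:ℂ)/295725) * E0_1_0_3 + ((-341524:ℂ)/98575) * E0_1_1_2 + ((152312:ℂ)/98575) * E0_1_2_1 + ((-26992:ℂ)/98575) * E0_1_3_0 + ((9036:ℂ)/138005) * E0_2_0_2 + ((5412:ℂ)/19715) * E0_2_1_1 + ((17352:ℂ)/19715) * E0_2_2_0 + ((5412:ℂ)/3943) * E0_3_0_1 + ((6288:ℂ)/3943) * E0_3_1_0 + ((-20797:ℂ)/15772)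 * E0_4_0_0 + ((97629713:ℂ)/99363600) * E1_0_0_4 + ((256348:ℂ)/98575) * E1_0_1_3 + ((152979:ℂ)/98575) * E1_0_2_2 + ((-152312:ℂ)/887175) * E1_0_3_1 + ((6748:ℂ)/295725) * E1_0_4_0 + ((-303353:ℂ)/276010) * E1_1_0_3 + ((223576:ℂ)/138005) * E1_1_1_2 + ((30996:ℂ)/19715) * E1_1_2_1 + ((-3856:ℂ)/19715) * E1_1_3_0 + ((-14883:ℂ)/3943) * E1_2_0_2 + ((-5412:ℂ)/3943) * E1_2_1_1 + ((-3144:ℂ)/3943) * E1_2_2_0 + ((5618:ℂ)/3943) * E1_3_1_0 + ((-32033:ℂ)/55202) * E1_4_0_0 + ((26990:ℂ)/35487) * E2_0_1_3 + ((3936:ℂ)/3943) * E2_1_1_2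
  have T : ∀ a b c : ℕ, a + b + c ≤ 3 → d0 a b c = 0 ∧ d1 a b c = 0 ∧ d2 a b c = 0 := by
    intro a b c h
    have ha : a ≤ 3 := by omega
    have hb : b ≤ 3 := by omega
    have hc : c ≤ 3 := by omega
    interval_cases a <;> interval_cases b <;> interval_cases c <;>
      first
        | exact absurd h (by omega)
        | exact ⟨by assumption, by assumption, by assumption⟩
  intro cc
  induction cc using Nat.strong_induction_on with
  | _ cc IHc =>
  intro aa
  induction aa using Nat.strong_induction_on with
  | _ aa IHa =>
  intro bb
  by_cases hdeg : aa + bb + cc ≤ 3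
  · exact T aa bb cc hdeg
  · have hbig : 4 ≤ aa + bb + cc := by omega
    have ta0 : (aa:ℂ) * d0 (aa-1) (bb+1) cc = 0 := by
      rcases Nat.eq_zero_or_pos aa with h|h
      · simp [h]
      · rw [(IHa (aa-1) (by omega) (bb+1)).1, mul_zero]
    have ta1 : (aa:ℂ) * d1 (aa-1) (bb+1) cc = 0 := by
      rcases Nat.eq_zero_or_pos aa with h|h
      · simp [h]
      · rw [(IHa (aa-1) (by omega) (bb+1)).2.1, mul_zero]
    have ta2 : (aa:ℂ) * d2 (aa-1) (bb+1) cc = 0 := by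
      rcases Nat.eq_zero_or_pos aa with h|h
      · simp [h]
      · rw [(IHa (aa-1) (by omega) (bb+1)).2.2, mul_zero]
    have tc0 : (cc:ℂ) * d0 aa (bb+1) (cc-1) = 0 := by
      rcases Nat.eq_zero_or_pos cc with h|h
      · simp [h]
      · rw [(IHc (cc-1) (by omega) aa (bb+1)).1, mul_zero]
    have tc1 : (cc:ℂ) * d1 aa (bb+1) (cc-1) = 0 := by
      rcases Nat.eq_zero_or_pos cc with h|h
      · simp [h]
      · rw [(IHc (cc-1) (by omega) aa (bb+1)).2.1, mul_zero]
    have tc2 : (cc:ℂ) * d2 aa (bb+1) (cc-1) = 0 := by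
      rcases Nat.eq_zero_or_pos cc with h|h
      · simp [h]
      · rw [(IHc (cc-1) (by omega) aa (bb+1)).2.2, mul_zero]
    have hb1 : ((bb:ℂ)+1) ≠ 0 := by
      have : ((bb+1:ℕ):ℂ) ≠ 0 := Nat.cast_ne_zero.mpr (by omega)
      push_cast at this
      exact this
    have hnz : ∀ k : ℕ, 2*aa+bb+3*cc ≠ k → (2*(aa:ℂ)+(bb:ℂ)+3*(cc:ℂ)-(k:ℂ)) ≠ 0 := by
      intro k hk hcon
      have h2 : ((2*aa+bb+3*cc:ℕ):ℂ) = ((k:ℕ):ℂ) := by push_cast; linear_combination hcon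
      exact hk (Nat.cast_injective h2)
    have h0 : d0 aa bb cc = 0 := by
      have e := hE0 aa (bb+1) cc
      simp only [Nat.add_sub_cancel] at e
      push_cast at e
      have key : (((bb:ℂ)+1) * (2*(aa:ℂ)+(bb:ℂ)+3*(cc:ℂ)-2)) * d0 aa bb cc = 0 := by
        linear_combination e - (2*(aa:ℂ)-(bb:ℂ)-7)*ta0 - ((aa:ℂ)+3*(bb:ℂ)+3-(cc:ℂ))*tc0 + 2*ta1 + ta2
      exact (mul_eq_zero.mp key).resolve_left (mul_ne_zero hb1 (hnz 2 (by omega)))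
    have h2 : d2 aa bb cc = 0 := by
      have e := hE2 aa (bb+1) cc
      simp only [Nat.add_sub_cancel] at e
      push_cast at e
      have key : (((bb:ℂ)+1) * (2*(aa:ℂ)+(bb:ℂ)+3*(cc:ℂ)-3)) * d2 aa bb cc = 0 := by
        linear_combination e - (2*(aa:ℂ)-(bb:ℂ)-3)*ta2 - ((aa:ℂ)+3*(bb:ℂ)-(cc:ℂ)+6)*tc2 + 3*tc1
      exact (mul_eq_zero.mp key).resolve_left (mul_ne_zero hb1 (hnz 3 (by omega)))
    have h1 : d1 aa bb cc = 0 := by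
      have e := hE1 aa (bb+1) cc
      simp only [Nat.add_sub_cancel] at e
      push_cast at e
      have key : (((bb:ℂ)+1) * (2*(aa:ℂ)+(bb:ℂ)+3*(cc:ℂ)-2)) * d1 aa bb cc = 0 := by
        linear_combination e - (2*(aa:ℂ)-(bb:ℂ)-2)*ta1 - ((aa:ℂ)+3*(bb:ℂ)+1-(cc:ℂ))*tc1
          - ((bb:ℂ)+1)*h0 + 3*((bb:ℂ)+1)*h2
      exact (mul_eq_zero.mp key).resolve_left (mul_ne_zero hb1 (hnz 2 (by omega)))
    exact ⟨h0, h1, h2⟩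

section Final

lemma DFLV00_fun : DD 0 (FLV 0) = fun x => 4*(x 0) + (2*(x 1) + 1*(x 2)) := by
  funext x; rw [DFLV00 x]; ring

lemma hF4 : Dk 2 0 0 (FLV 0) 0 = 4 := by
  have h2 : Dk 2 0 0 (FLV 0) 0 = DD 0 (DD 0 (FLV 0)) 0 := rfl
  rw [h2, DFLV00_fun]
  have d1 : DifferentiableAt ℂ (fun x : E3 => 4*(x 0)) 0 := (dA_coord 0 0).const_mul 4
  have d2 : DifferentiableAt ℂ (fun x : E3 => 2*(x 1)) 0 := (dA_coord 1 0).const_mul 2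
  have d3 : DifferentiableAt ℂ (fun x : E3 => 1*(x 2)) 0 := (dA_coord 2 0).const_mul 1
  rw [DD_add d1 (show DifferentiableAt ℂ (fun x : E3 => 2*(x 1) + 1*(x 2)) 0 from d2.add d3) 0, DD_add d2 d3 0,
    DD_const_mul (dA_coord 0 0) 4 0, DD_const_mul (dA_coord 1 0) 2 0,
    DD_const_mul (dA_coord 2 0) 1 0, DD_coord 0 0 0, DD_coord 0 1 0, DD_coord 0 2 0]
  norm_num [fin10, fin20]


end Final

/-- Any analytic tensor invariant of type `(1,0)` (Lie symmetry) of the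
three-dimensional Lotka–Volterra system near the origin of `ℂ³` is the vector field
itself up to a constant factor. -/
theorem symmetry_of_LV
    (U : Set (Fin 3 → ℂ)) (hU : IsOpen U) (hUconn : IsPreconnected U)
    (h0 : (0 : Fin 3 → ℂ) ∈ U)
    (V : Fin 3 → (Fin 3 → ℂ) → ℂ)
    (hVan : ∀ i, AnalyticOnNhd ℂ (V i) U)
    (hinv : ∀ (i : Fin 3), ∀ x ∈ U,
      (∑ t, FLV t x * pderivC (V i) t x) - ∑ t, V t x * pderivC (FLV i) t x = 0) :
    ∃ c : ℂ, ∀ (i : Fin 3), ∀ x ∈ U, V i x = c * FLV i x := by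
  have hid0 : ∀ x ∈ U, (FLV 0 x * DD 0 (V 0) x + FLV 1 x * DD 1 (V 0) x + FLV 2 x * DD 2 (V 0) x)
      - (V 0 x * DD 0 (FLV 0) x + V 1 x * DD 1 (FLV 0) x + V 2 x * DD 2 (FLV 0) x) = 0 := by
    intro x hx
    have h := hinv 0 x hx
    rw [Fin.sum_univ_three, Fin.sum_univ_three] at h
    exact h
  have hid1 : ∀ x ∈ U, (FLV 0 x * DD 0 (V 1) x + FLV 1 x * DD 1 (V 1) x + FLV 2 x * DD 2 (V 1) x)
      - (V 0 x * DD 0 (FLV 1) x + V 1 x * DD 1 (FLV 1) x + V 2 x * DD 2 (FLV 1) x) = 0 := by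
    intro x hx
    have h := hinv 1 x hx
    rw [Fin.sum_univ_three, Fin.sum_univ_three] at h
    exact h
  have hid2 : ∀ x ∈ U, (FLV 0 x * DD 0 (V 2) x + FLV 1 x * DD 1 (V 2) x + FLV 2 x * DD 2 (V 2) x)
      - (V 0 x * DD 0 (FLV 2) x + V 1 x * DD 1 (FLV 2) x + V 2 x * DD 2 (FLV 2) x) = 0 := by
    intro x hx
    have h := hinv 2 x hx
    rw [Fin.sum_univ_three, Fin.sum_univ_three] at h
    exact h
  have EV0 := keyE0 hU h0 (hVan 0) (hVan 1) (hVan 2) hid0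
  have EV1 := keyE1 hU h0 (hVan 0) (hVan 1) (hVan 2) hid1
  have EV2 := keyE2 hU h0 (hVan 0) (hVan 1) (hVan 2) hid2
  have EF0 := keyE0 isOpen_univ (Set.mem_univ 0) (an_FLV _ 0) (an_FLV _ 1) (an_FLV _ 2)
    (fun x _ => sub_self _)
  have EF1 := keyE1 isOpen_univ (Set.mem_univ 0) (an_FLV _ 0) (an_FLV _ 1) (an_FLV _ 2)
    (fun x _ => sub_self _)
  have EF2 := keyE2 isOpen_univ (Set.mem_univ 0) (an_FLV _ 0) (an_FLV _ 1) (an_FLV _ 2)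
    (fun x _ => sub_self _)
  set cst : ℂ := Dk 2 0 0 (V 0) 0 / 4 with hcst
  have hz := coreZero
    (fun a b c => Dk a b c (V 0) 0 - cst * Dk a b c (FLV 0) 0)
    (fun a b c => Dk a b c (V 1) 0 - cst * Dk a b c (FLV 1) 0)
    (fun a b c => Dk a b c (V 2) 0 - cst * Dk a b c (FLV 2) 0)
    (fun a b c => by linear_combination (EV0 a b c) - cst * (EF0 a b c))
    (fun a b c => by linear_combination (EV1 a b c) - cst * (EF1 a b c))
    (fun a b c => by linear_combination (EV2 a b c) - cst * (EF2 a b c))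
    (by
      show Dk 2 0 0 (V 0) 0 - cst * Dk 2 0 0 (FLV 0) 0 = 0
      rw [hF4, hcst]
      field_simp
      ring)
  have wzero : ∀ i : Fin 3, ∀ a b c : ℕ, Dk a b c (V i) 0 - cst * Dk a b c (FLV i) 0 = 0 := by
    intro i a b c
    fin_cases i
    · exact (hz c a b).1
    · exact (hz c a b).2.1
    · exact (hz c a b).2.2
  have main : ∀ i : Fin 3, Set.EqOn (fun x => V i x - cst * FLV i x) 0 U := by
    intro i
    have hanW : AnalyticOnNhd ℂ (fun x => V i x - cst * FLV i x) U :=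
      (hVan i).sub (analyticOnNhd_const.mul (an_FLV U i))
    have hDk : ∀ a b c, Dk a b c (fun x => V i x - cst * FLV i x) 0 = 0 := by
      intro a b c
      have hrw : (fun x => V i x - cst * FLV i x) = (fun x => V i x + (-cst) * FLV i x) := by
        funext x; ring
      rw [hrw, Dk_add0 hU h0 (hVan i) (an_const_mul (an_FLV U i) (-cst)) a b c,
        Dk_cm0 hU h0 (an_FLV U i) (-cst) a b c]
      have := wzero i a b c
      linear_combination this
    have hev : (fun x => V i x - cst * FLV i x) =ᶠ[nhds 0] 0 := vanish_near hU h0 hanW hDk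
    exact hanW.eqOn_zero_of_preconnected_of_eventuallyEq_zero hUconn h0 hev
  refine ⟨cst, fun i x hx => ?_⟩
  have h2 : V i x - cst * FLV i x = 0 := main i hx
  linear_combination h2
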